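/- arXiv:2210.05247 — 6 statements merged into one kernel-verified Lean document; each statement's English description precedes it below -/
import Mathlib

section
/- (Theorem 1, training bound) The classification error satisfies ℓ ≤ 2·exp( -2·(π_inv + (2p - 1)·Σ_{i=1}^D α_i·π_{sp,i})² / (4·Σ_{i=1}^D α_i² + 1) ), where α_i = w_{sp,i}/w_inv. -/
lemma hoeff2 {q : ℝ} (hq0 : 0 ≤ q) (hq1 : q ≤ 1) (x : ℝ) :
    1 - q + q * Real.exp x ≤ Real.exp (q * x + x ^ 2 / 8) := by
  have hpos : ∀ y : ℝ, 0 < 1 - q + q * Real.exp y := by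
    intro y
    rcases eq_or_lt_of_le hq0 with h | h
    · simp [← h]
    · have h1 : 0 < q * Real.exp y := mul_pos h (Real.exp_pos y)
      nlinarith
  set h : ℝ → ℝ := fun y => 1 - q + q * Real.exp y with hh
  set g : ℝ → ℝ := fun y => q * y + y ^ 2 / 8 - Real.log (h y) with hg
  set g1 : ℝ → ℝ := fun y => q + y / 4 - q * Real.exp y / h y with hg1
  have hd1 : ∀ y, HasDerivAt g (g1 y) y := by
    intro y
    have e1 : HasDerivAt (fun y : ℝ => q * y) q y := by
      simpa using (hasDerivAt_id y).const_mul q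
    have e2 : HasDerivAt (fun y : ℝ => y ^ 2 / 8) (y / 4) y := by
      have := (hasDerivAt_pow 2 y).div_const 8
      exact this.congr_deriv (by push_cast; ring)
    have eh : HasDerivAt h (q * Real.exp y) y := by
      exact ((Real.hasDerivAt_exp y).const_mul q).const_add (1 - q)
    have e3 : HasDerivAt (fun y => Real.log (h y)) (q * Real.exp y / h y) y := by
      have := (Real.hasDerivAt_log (hpos y).ne').comp y eh
      rw [div_eq_inv_mul]; exact this
    exact (e1.add e2).sub e3
  have hd2 : ∀ y, HasDerivAt g1
      (1 / 4 - (q * Real.exp y * h y - q * Real.exp y * (q * Real.exp y)) / (h y) ^ 2) y := by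
    intro y
    have e2 : HasDerivAt (fun y : ℝ => q + y / 4) (1 / 4) y := by
      simpa using ((hasDerivAt_id y).div_const 4).const_add q
    have eh : HasDerivAt h (q * Real.exp y) y := by
      exact ((Real.hasDerivAt_exp y).const_mul q).const_add (1 - q)
    have enum : HasDerivAt (fun y : ℝ => q * Real.exp y) (q * Real.exp y) y :=
      (Real.hasDerivAt_exp y).const_mul q
    have e3 := enum.div eh (hpos y).ne'
    exact e2.sub e3
  have hd2nn : ∀ y, 0 ≤ 1 / 4 - (q * Real.exp y * h y - q * Real.exp y * (q * Real.exp y)) / (h y) ^ 2 := by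
    intro y
    set u := q * Real.exp y
    set v := h y
    have hv : 0 < v := hpos y
    have key : 1 / 4 - (u * v - u * u) / v ^ 2 = (v - 2 * u) ^ 2 / (4 * v ^ 2) := by
      field_simp
      ring
    rw [key]
    positivity
  have hg1mono : Monotone g1 := by
    apply monotone_of_deriv_nonneg
    · exact fun y => (hd2 y).differentiableAt
    · intro y
      rw [(hd2 y).deriv]
      exact hd2nn y
  have hg10 : g1 0 = 0 := by
    simp [hg1, hh, Real.exp_zero]
  have hgz : g 0 = 0 := by
    simp [hg, hh, Real.exp_zero]
  have hgnn : ∀ y, 0 ≤ g y := by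
    intro y
    rcases le_total 0 y with hy | hy
    · have hmono : MonotoneOn g (Set.Ici 0) := by
        apply monotoneOn_of_deriv_nonneg (convex_Ici 0)
        · exact (Differentiable.continuous (fun z => (hd1 z).differentiableAt)).continuousOn
        · intro z hz
          exact ((hd1 z).differentiableAt).differentiableWithinAt
        · intro z hz
          rw [(hd1 z).deriv]
          have := hg1mono (le_of_lt (by simpa using hz) : (0:ℝ) ≤ z)
          rw [hg10] at this
          exact this
      have := hmono (Set.self_mem_Ici) (Set.mem_Ici.2 hy) hy
      rwa [hgz] at this
    · have hmono : AntitoneOn g (Set.Iic 0) := by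
        apply antitoneOn_of_deriv_nonpos (convex_Iic 0)
        · exact (Differentiable.continuous (fun z => (hd1 z).differentiableAt)).continuousOn
        · intro z hz
          exact ((hd1 z).differentiableAt).differentiableWithinAt
        · intro z hz
          rw [(hd1 z).deriv]
          have := hg1mono (le_of_lt (by simpa using hz) : z ≤ (0:ℝ))
          rw [hg10] at this
          exact this
      have := hmono (Set.mem_Iic.2 hy) (Set.self_mem_Iic) hy
      rwa [hgz] at this
  have := hgnn x
  have hlog : Real.log (h x) ≤ q * x + x ^ 2 / 8 := by
    simp only [hg] at this
    linarith
  show h x ≤ Real.exp (q * x + x ^ 2 / 8)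
  have hx : (0:ℝ) < h x := hpos x
  rw [← Real.exp_log hx]
  exact Real.exp_le_exp.2 hlog



lemma hoeff3 {π' p : ℝ} (h0 : 0 ≤ π') (h1 : π' ≤ 1) (hp : 1 / 2 ≤ p) (hp1 : p ≤ 1) (u : ℝ) :
    (1 - π') + π' * (p * Real.exp u + (1 - p) * Real.exp (-u)) ≤
      Real.exp (π' * (2 * p - 1) * u + u ^ 2 / 2) := by
  have a2 : Real.exp (u / 2) * Real.exp (u / 2) = Real.exp u := by
    rw [← Real.exp_add]; ring_nf
  have b2 : Real.exp (-(u / 2)) * Real.exp (-(u / 2)) = Real.exp (-u) := by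
    rw [← Real.exp_add]; ring_nf
  have ab : Real.exp (u / 2) * Real.exp (-(u / 2)) = 1 := by
    rw [← Real.exp_add]; simp
  have hcosh : 2 ≤ Real.exp u + Real.exp (-u) := by
    nlinarith [sq_nonneg (Real.exp (u / 2) - Real.exp (-(u / 2)))]
  obtain ⟨Q, hQ⟩ : ∃ Q : ℝ, Q = (1 - π') / 2 + π' * p := ⟨_, rfl⟩
  have hQ0 : 0 ≤ Q := by rw [hQ]; nlinarith
  have hQ1 : Q ≤ 1 := by rw [hQ]; nlinarith
  have step1 : (1 - π') + π' * (p * Real.exp u + (1 - p) * Real.exp (-u)) ≤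
      Q * Real.exp u + (1 - Q) * Real.exp (-u) := by
    have : Q * Real.exp u + (1 - Q) * Real.exp (-u)
        - ((1 - π') + π' * (p * Real.exp u + (1 - p) * Real.exp (-u)))
        = (1 - π') * ((Real.exp u + Real.exp (-u)) / 2 - 1) := by
      rw [hQ]; ring
    have hnn : 0 ≤ (1 - π') * ((Real.exp u + Real.exp (-u)) / 2 - 1) :=
      mul_nonneg (by linarith) (by linarith)
    linarith
  have e2u : Real.exp u = Real.exp (-u) * Real.exp (2 * u) := by
    rw [← Real.exp_add]; ring_nf
  have step2 : Q * Real.exp u + (1 - Q) * Real.exp (-u) ≤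
      Real.exp (π' * (2 * p - 1) * u + u ^ 2 / 2) := by
    have key : Q * Real.exp u + (1 - Q) * Real.exp (-u)
        = Real.exp (-u) * (1 - Q + Q * Real.exp (2 * u)) := by
      rw [e2u]; ring
    rw [key]
    have h2 := hoeff2 hQ0 hQ1 (2 * u)
    have hle : Real.exp (-u) * (1 - Q + Q * Real.exp (2 * u)) ≤
        Real.exp (-u) * Real.exp (Q * (2 * u) + (2 * u) ^ 2 / 8) :=
      mul_le_mul_of_nonneg_left h2 (Real.exp_pos (-u)).le
    apply hle.trans
    rw [← Real.exp_add]
    apply le_of_eq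
    congr 1
    rw [hQ]; ring
  exact step1.trans step2


lemma hpi_aux (D : ℕ) (G : Fin D → Bool → ℝ) :
    (∑ f : Fin D → Bool, ∏ i, G i (f i)) = ∏ i, (G i true + G i false) := by
  classical
  conv_lhs => rw [← Fintype.piFinset_univ]
  rw [← Finset.prod_univ_sum]
  exact Finset.prod_congr rfl fun i _ => by simp

lemma hfact_aux (D : ℕ) (F : Bool → ℝ) (G : Fin D → Bool → Bool → ℝ) :
    (∑ k : Bool × (Fin D → Bool) × Bool × (Fin D → Bool),
      (1/2 : ℝ) * F k.2.2.1 * ∏ i, G i (decide (k.2.1 i = k.1)) (k.2.2.2 i))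
    = (F true + F false) *
        ∏ i, ((G i true true + G i true false) + (G i false true + G i false false)) := by
  classical
  rw [Fintype.sum_prod_type]
  have inner1 : ∀ (y : Bool) (ε : Fin D → Bool) (a : Bool),
      (∑ c : Fin D → Bool, (1/2:ℝ) * F a * ∏ i, G i (decide (ε i = y)) (c i))
      = (1/2) * F a * ∏ i, (G i (decide (ε i = y)) true + G i (decide (ε i = y)) false) := by
    intro y ε a
    rw [← Finset.mul_sum, hpi_aux D (fun i b => G i (decide (ε i = y)) b)]
  have inner2 : ∀ y : Bool,
      (∑ x : (Fin D → Bool) × Bool × (Fin D → Bool),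
        (1/2:ℝ) * F x.2.1 * ∏ i, G i (decide (x.1 i = y)) (x.2.2 i))
      = (1/2) * (F true + F false) *
          ∏ i, ((G i true true + G i true false) + (G i false true + G i false false)) := by
    intro y
    rw [Fintype.sum_prod_type]
    calc (∑ ε : Fin D → Bool, ∑ x : Bool × (Fin D → Bool),
            (1/2:ℝ) * F x.1 * ∏ i, G i (decide (ε i = y)) (x.2 i))
        = ∑ ε : Fin D → Bool, ∑ a : Bool, ∑ c : Fin D → Bool,
            (1/2:ℝ) * F a * ∏ i, G i (decide (ε i = y)) (c i) := by
          refine Finset.sum_congr rfl fun ε _ => ?_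
          rw [Fintype.sum_prod_type]
      _ = ∑ ε : Fin D → Bool, ∑ a : Bool,
            (1/2:ℝ) * F a * ∏ i, (G i (decide (ε i = y)) true + G i (decide (ε i = y)) false) := by
          refine Finset.sum_congr rfl fun ε _ => Finset.sum_congr rfl fun a _ => inner1 y ε a
      _ = ∑ ε : Fin D → Bool,
            (1/2:ℝ) * (F true + F false) *
              ∏ i, (G i (decide (ε i = y)) true + G i (decide (ε i = y)) false) := by
          refine Finset.sum_congr rfl fun ε _ => ?_
          rw [Fintype.sum_bool]
          ring
      _ = ∑ ε : Fin D → Bool,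
            (1/2:ℝ) * (F true + F false) *
              ∏ i, (fun i e => G i (decide (e = y)) true + G i (decide (e = y)) false) i (ε i) := rfl
      _ = (1/2:ℝ) * (F true + F false) *
            ∏ i, ((G i (decide (true = y)) true + G i (decide (true = y)) false)
              + (G i (decide (false = y)) true + G i (decide (false = y)) false)) := by
          rw [← Finset.mul_sum, hpi_aux D (fun i e => G i (decide (e = y)) true + G i (decide (e = y)) false)]
      _ = (1/2) * (F true + F false) *
            ∏ i, ((G i true true + G i true false) + (G i false true + G i false false)) := by
          cases y <;> simp <;>
            exact Or.inl (Finset.prod_congr rfl fun i _ => by ring)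
  rw [Fintype.sum_bool, inner2 true, inner2 false]
  ring


namespace Stmt2Aux

noncomputable section
open Real

def bs (b : Bool) : ℝ := if b then 1 else -1
def b01 (b : Bool) : ℝ := if b then 1 else 0

abbrev K (D : ℕ) := Bool × (Fin D → Bool) × Bool × (Fin D → Bool)

variable {D : ℕ} {Ω : Type*}

def Aset (Y : Ω → ℝ) (Z : Fin D → Ω → ℝ) (mInv : Ω → ℝ) (mSp : Fin D → Ω → ℝ)
    (k : K D) : Set Ω :=
  {ω | Y ω = bs k.1 ∧ (∀ i, Z i ω = bs (k.2.1 i)) ∧ mInv ω = b01 k.2.2.1 ∧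
    (∀ i, mSp i ω = b01 (k.2.2.2 i))}

def Wt (p πInv : ℝ) (πSp : Fin D → ℝ) (k : K D) : ℝ :=
  (1/2) * (∏ i, if k.2.1 i = k.1 then p else 1 - p) *
    (if k.2.2.1 then πInv else 1 - πInv) *
    (∏ i, if k.2.2.2 i then πSp i else 1 - πSp i)

def Ov (wInv : ℝ) (wSp : Fin D → ℝ) (k : K D) : ℝ :=
  wInv * b01 k.2.2.1 * bs k.1 + ∑ i, wSp i * b01 (k.2.2.2 i) * bs (k.2.1 i)

def Tv (α : Fin D → ℝ) (k : K D) : ℝ :=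
  b01 k.2.2.1 + ∑ i, α i * b01 (k.2.2.2 i) * (if k.2.1 i = k.1 then 1 else -1)

def valk (wInv : ℝ) (wSp : Fin D → ℝ) (k : K D) : ℝ :=
  1 - bs k.1 * Real.sign (Ov wInv wSp k)

lemma bs_inj {b b' : Bool} (h : bs b = bs b') : b = b' := by
  cases b <;> cases b' <;> simp_all [bs] <;> norm_num at h

lemma b01_inj {b b' : Bool} (h : b01 b = b01 b') : b = b' := by
  cases b <;> cases b' <;> simp_all [b01]

lemma bs_mul (b b' : Bool) : bs b' * bs b = if b = b' then 1 else -1 := by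
  cases b <;> cases b' <;> norm_num [bs]

lemma Wt_nonneg {p πInv : ℝ} {πSp : Fin D → ℝ} (hp : 0 ≤ p) (hp1 : p ≤ 1)
    (hπInv0 : 0 ≤ πInv) (hπInv1 : πInv ≤ 1)
    (hπSp0 : ∀ i, 0 ≤ πSp i) (hπSp1 : ∀ i, πSp i ≤ 1) (k : K D) :
    0 ≤ Wt p πInv πSp k := by
  unfold Wt
  apply mul_nonneg
  apply mul_nonneg
  apply mul_nonneg
  · norm_num
  · exact Finset.prod_nonneg fun i _ => by split <;> linarith
  · split <;> linarith
  · exact Finset.prod_nonneg fun i _ => by split <;> [exact hπSp0 i; linarith [hπSp1 i]]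

lemma Aset_measurable [MeasurableSpace Ω] {Y : Ω → ℝ} {Z : Fin D → Ω → ℝ}
    {mInv : Ω → ℝ} {mSp : Fin D → Ω → ℝ}
    (hY : Measurable Y) (hZ : ∀ i, Measurable (Z i))
    (hmInv : Measurable mInv) (hmSp : ∀ i, Measurable (mSp i)) (k : K D) :
    MeasurableSet (Aset Y Z mInv mSp k) := by
  unfold Aset
  simp only [Set.setOf_and]
  apply MeasurableSet.inter
  · exact hY (measurableSet_singleton _)
  apply MeasurableSet.inter
  · rw [Set.setOf_forall]
    exact MeasurableSet.iInter fun i => (hZ i) (measurableSet_singleton _)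
  apply MeasurableSet.inter
  · exact hmInv (measurableSet_singleton _)
  · rw [Set.setOf_forall]
    exact MeasurableSet.iInter fun i => (hmSp i) (measurableSet_singleton _)

lemma Aset_disjoint {Y : Ω → ℝ} {Z : Fin D → Ω → ℝ} {mInv : Ω → ℝ}
    {mSp : Fin D → Ω → ℝ} {k k' : K D} {ω : Ω}
    (h : ω ∈ Aset Y Z mInv mSp k) (h' : ω ∈ Aset Y Z mInv mSp k') : k = k' := by
  obtain ⟨y, ε, a, c⟩ := k
  obtain ⟨y', ε', a', c'⟩ := k'
  obtain ⟨h1, h2, h3, h4⟩ := h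
  obtain ⟨h1', h2', h3', h4'⟩ := h'
  simp only [Prod.mk.injEq]
  refine ⟨bs_inj (h1 ▸ h1'), funext fun i => bs_inj ((h2 i) ▸ (h2' i)),
    b01_inj (h3 ▸ h3'), funext fun i => b01_inj ((h4 i) ▸ (h4' i))⟩

lemma O_eq {Y : Ω → ℝ} {Z : Fin D → Ω → ℝ} {mInv : Ω → ℝ} {mSp : Fin D → Ω → ℝ}
    {wInv : ℝ} {wSp : Fin D → ℝ} {k : K D} {ω : Ω}
    (h : ω ∈ Aset Y Z mInv mSp k) :
    wInv * mInv ω * Y ω + ∑ i, wSp i * mSp i ω * Z i ω = Ov wInv wSp k := by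
  obtain ⟨h1, h2, h3, h4⟩ := h
  unfold Ov
  rw [h1, h3]
  congr 1
  exact Finset.sum_congr rfl fun i _ => by rw [h2 i, h4 i]


lemma Wt_canon (p πInv : ℝ) (πSp : Fin D → ℝ) (k : K D) :
    Wt p πInv πSp k = (1/2 : ℝ) * (if k.2.2.1 then πInv else 1 - πInv) *
      ∏ i, ((fun (i : Fin D) (e b : Bool) =>
        (if e then p else 1 - p) * (if b then πSp i else 1 - πSp i)) i
          (decide (k.2.1 i = k.1)) (k.2.2.2 i)) := by
  unfold Wt
  rw [Finset.prod_mul_distrib]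
  simp only [decide_eq_true_eq, Bool.if_true_left]
  ring_nf

lemma Wt_sum (p πInv : ℝ) (πSp : Fin D → ℝ) :
    (∑ k : K D, Wt p πInv πSp k) = 1 := by
  calc (∑ k : K D, Wt p πInv πSp k)
      = ∑ k : K D, (1/2 : ℝ) * (if k.2.2.1 then πInv else 1 - πInv) *
          ∏ i, ((fun (i : Fin D) (e b : Bool) =>
            (if e then p else 1 - p) * (if b then πSp i else 1 - πSp i)) i
              (decide (k.2.1 i = k.1)) (k.2.2.2 i)) :=
        Finset.sum_congr rfl fun k _ => Wt_canon p πInv πSp k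
    _ = 1 := by
        rw [hfact_aux D (fun a => if a then πInv else 1 - πInv)
          (fun (i : Fin D) (e b : Bool) =>
            (if e then p else 1 - p) * (if b then πSp i else 1 - πSp i))]
        norm_num
        rw [Finset.prod_congr rfl (fun (i : Fin D) (_ : i ∈ Finset.univ) => show
          (p * πSp i + p * (1 - πSp i)) + ((1-p) * πSp i + (1-p) * (1 - πSp i)) = 1 by ring)]
        simp

lemma chern_canon (p πInv t : ℝ) (πSp α : Fin D → ℝ) (k : K D) :
    Wt p πInv πSp k * Real.exp (-t * Tv α k)
    = (1/2 : ℝ) * ((fun a : Bool => (if a then πInv else 1 - πInv) * Real.exp (-(t * b01 a))) k.2.2.1) *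
      ∏ i, ((fun (i : Fin D) (e b : Bool) =>
        (if e then p else 1 - p) * (if b then πSp i else 1 - πSp i) *
          Real.exp (-(t * (α i * b01 b * (if e then 1 else -1))))) i
            (decide (k.2.1 i = k.1)) (k.2.2.2 i)) := by
  have hexp : Real.exp (-t * Tv α k)
      = Real.exp (-(t * b01 k.2.2.1)) *
        ∏ i, Real.exp (-(t * (α i * b01 (k.2.2.2 i) * (if k.2.1 i = k.1 then 1 else -1)))) := by
    rw [← Real.exp_sum, ← Real.exp_add]
    congr 1
    unfold Tv
    rw [neg_mul, mul_add, Finset.mul_sum, neg_add, ← Finset.sum_neg_distrib]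
  rw [hexp]
  unfold Wt
  simp only [decide_eq_true_eq]
  rw [Finset.prod_mul_distrib, Finset.prod_mul_distrib]
  ring

lemma chern_sum (p πInv t : ℝ) (πSp α : Fin D → ℝ) :
    (∑ k : K D, Wt p πInv πSp k * Real.exp (-t * Tv α k))
    = ((1 - πInv) + πInv * Real.exp (-t)) *
      ∏ i, ((1 - πSp i) + πSp i *
        (p * Real.exp (-(t * α i)) + (1 - p) * Real.exp (t * α i))) := by
  calc (∑ k : K D, Wt p πInv πSp k * Real.exp (-t * Tv α k))
      = ∑ k : K D, (1/2 : ℝ) *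
          ((fun a : Bool => (if a then πInv else 1 - πInv) * Real.exp (-(t * b01 a))) k.2.2.1) *
          ∏ i, ((fun (i : Fin D) (e b : Bool) =>
            (if e then p else 1 - p) * (if b then πSp i else 1 - πSp i) *
              Real.exp (-(t * (α i * b01 b * (if e then 1 else -1))))) i
                (decide (k.2.1 i = k.1)) (k.2.2.2 i)) :=
        Finset.sum_congr rfl fun k _ => chern_canon p πInv t πSp α k
    _ = _ := by
        rw [hfact_aux D
          (fun a : Bool => (if a then πInv else 1 - πInv) * Real.exp (-(t * b01 a)))
          (fun (i : Fin D) (e b : Bool) =>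
            (if e then p else 1 - p) * (if b then πSp i else 1 - πSp i) *
              Real.exp (-(t * (α i * b01 b * (if e then 1 else -1)))))]
        simp only [b01]
        norm_num
        congr 1
        · ring
        · exact Finset.prod_congr rfl fun i _ => by ring

lemma bsOv_eq_Tv {wInv : ℝ} (hwInv : wInv ≠ 0) (wSp : Fin D → ℝ) (k : K D) :
    bs k.1 * Ov wInv wSp k = wInv * Tv (fun i => wSp i / wInv) k := by
  unfold Ov Tv
  rw [mul_add, mul_add, Finset.mul_sum, Finset.mul_sum]
  congr 1
  · rw [show bs k.1 * (wInv * b01 k.2.2.1 * bs k.1) = wInv * b01 k.2.2.1 * (bs k.1 * bs k.1) by ring,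
      bs_mul]
    simp
  · refine Finset.sum_congr rfl fun i _ => ?_
    rw [show bs k.1 * (wSp i * b01 (k.2.2.2 i) * bs (k.2.1 i))
        = wSp i * b01 (k.2.2.2 i) * (bs k.1 * bs (k.2.1 i)) by ring, bs_mul]
    field_simp

lemma valk_nonneg (wInv : ℝ) (wSp : Fin D → ℝ) (k : K D) :
    0 ≤ valk wInv wSp k ∧ valk wInv wSp k ≤ 2 := by
  unfold valk
  rcases Real.sign_apply_eq (Ov wInv wSp k) with h | h | h <;> rw [h] <;>
    cases hk : k.1 <;> norm_num [bs]

lemma termwise {wInv t p πInv : ℝ} {wSp : Fin D → ℝ} {πSp : Fin D → ℝ}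
    (hwInv : 0 < wInv) (ht : 0 ≤ t) (k : K D)
    (hWnn : 0 ≤ Wt p πInv πSp (D := D) k) :
    Wt p πInv πSp k * valk wInv wSp k
      ≤ 2 * (Wt p πInv πSp k * Real.exp (-t * Tv (fun i => wSp i / wInv) k)) := by
  rcases le_or_gt (Tv (fun i => wSp i / wInv) k) 0 with hT | hT
  · have hval := valk_nonneg wInv wSp k
    have hexp : 1 ≤ Real.exp (-t * Tv (fun i => wSp i / wInv) k) :=
      Real.one_le_exp (by nlinarith)
    have h1 : Wt p πInv πSp k * valk wInv wSp k ≤ Wt p πInv πSp k * 2 :=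
      mul_le_mul_of_nonneg_left hval.2 hWnn
    have h2 : 2 * (Wt p πInv πSp k * 1) ≤
        2 * (Wt p πInv πSp k * Real.exp (-t * Tv (fun i => wSp i / wInv) k)) := by
      have := mul_le_mul_of_nonneg_left hexp hWnn
      linarith
    linarith
  · have hpos : 0 < bs k.1 * Ov wInv wSp k := by
      rw [bsOv_eq_Tv (ne_of_gt hwInv) wSp k]; exact mul_pos hwInv hT
    have hval : valk wInv wSp k = 0 := by
      unfold valk
      cases hk : k.1
      · have hneg : Ov wInv wSp k < 0 := by
          rw [hk] at hpos; simp [bs] at hpos; linarith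
        rw [Real.sign_of_neg hneg]; simp [bs]
      · have hposO : 0 < Ov wInv wSp k := by
          rw [hk] at hpos; simp [bs] at hpos; exact hpos
        rw [Real.sign_of_pos hposO]; simp [bs]
    rw [hval, mul_zero]
    have : 0 ≤ Wt p πInv πSp k * Real.exp (-t * Tv (fun i => wSp i / wInv) k) :=
      mul_nonneg hWnn (Real.exp_pos _).le
    linarith


end

end Stmt2Aux


open MeasureTheory in
lemma integral_partition {Ω : Type*} [MeasurableSpace Ω] (μ : Measure Ω)
    [IsProbabilityMeasure μ] {ι : Type*} [Fintype ι]
    (A : ι → Set Ω) (hmeas : ∀ k, MeasurableSet (A k))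
    (hdisj : ∀ k k' ω, ω ∈ A k → ω ∈ A k' → k = k')
    (W : ι → ℝ) (hWnn : ∀ k, 0 ≤ W k)
    (hμA : ∀ k, μ (A k) = ENNReal.ofReal (W k)) (hsum : ∑ k, W k = 1)
    (f : Ω → ℝ) (v : ι → ℝ) (hf : ∀ k ω, ω ∈ A k → f ω = v k) :
    ∫ ω, f ω ∂μ = ∑ k, W k * v k := by
  classical
  have hUmeas : MeasurableSet (⋃ k, A k) := MeasurableSet.iUnion hmeas
  have hpair : Pairwise (Function.onFun Disjoint A) := by
    intro k k' hne
    rw [Function.onFun, Set.disjoint_left]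
    intro ω h1 h2
    exact hne (hdisj k k' ω h1 h2)
  have hUμ : μ (⋃ k, A k) = 1 := by
    rw [measure_iUnion hpair hmeas, tsum_fintype]
    calc (∑ k, μ (A k)) = ∑ k, ENNReal.ofReal (W k) := by simp_rw [hμA]
      _ = ENNReal.ofReal (∑ k, W k) := (ENNReal.ofReal_sum_of_nonneg (fun k _ => hWnn k)).symm
      _ = 1 := by rw [hsum]; simp
  have hcompl : μ (⋃ k, A k)ᶜ = 0 := by
    rw [prob_compl_eq_one_sub hUmeas, hUμ, tsub_self]
  have hae : f =ᵐ[μ] (fun ω => ∑ k, (A k).indicator (fun _ => v k) ω) := by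
    refine MeasureTheory.ae_iff.2 (measure_mono_null ?_ hcompl)
    intro ω hω
    simp only [Set.mem_setOf_eq] at hω
    simp only [Set.mem_compl_iff, Set.mem_iUnion, not_exists]
    intro k hk
    apply hω
    have hsingle : (∑ k', (A k').indicator (fun _ => v k') ω) = v k := by
      rw [Finset.sum_eq_single_of_mem k (Finset.mem_univ k)
        (fun k' _ hne => Set.indicator_of_notMem
          (fun hmem => hne (hdisj k' k ω hmem hk)) _)]
      exact Set.indicator_of_mem hk _
    exact (hf k ω hk).trans hsingle.symm
  rw [integral_congr_ae hae,
    integral_finset_sum _ (fun k _ => (integrable_const (v k)).indicator (hmeas k))]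
  refine Finset.sum_congr rfl fun k _ => ?_
  rw [integral_indicator_const _ (hmeas k), measureReal_def, hμA k, smul_eq_mul,
    ENNReal.toReal_ofReal (hWnn k)]

/-- **Theorem 1, training bound.** -/
theorem stmt_2
    {Ω : Type*} [MeasurableSpace Ω] (μ : MeasureTheory.Measure Ω)
    [MeasureTheory.IsProbabilityMeasure μ]
    (D : ℕ) (hD : 0 < D) (p : ℝ) (hp : 1 / 2 < p) (hp1 : p ≤ 1)
    (πInv : ℝ) (πSp : Fin D → ℝ)
    (hπInv0 : 0 ≤ πInv) (hπInv1 : πInv ≤ 1)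
    (hπSp0 : ∀ i, 0 ≤ πSp i) (hπSp1 : ∀ i, πSp i ≤ 1)
    (Y : Ω → ℝ) (Z : Fin D → Ω → ℝ) (mInv : Ω → ℝ) (mSp : Fin D → Ω → ℝ)
    (hY : Measurable Y) (hZ : ∀ i, Measurable (Z i))
    (hmInv : Measurable mInv) (hmSp : ∀ i, Measurable (mSp i))
    (hlaw : ∀ (y : Bool) (ε : Fin D → Bool) (a : Bool) (c : Fin D → Bool),
      μ {ω | Y ω = (if y then (1 : ℝ) else -1) ∧
             (∀ i, Z i ω = (if ε i then (1 : ℝ) else -1)) ∧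
             mInv ω = (if a then (1 : ℝ) else 0) ∧
             (∀ i, mSp i ω = (if c i then (1 : ℝ) else 0))} =
        ENNReal.ofReal ((1 / 2) *
          (∏ i, (if ε i = y then p else 1 - p)) *
          (if a then πInv else 1 - πInv) *
          (∏ i, (if c i then πSp i else 1 - πSp i))))
    (wInv : ℝ) (hwInv : 0 < wInv) (wSp : Fin D → ℝ) (hwSp : ∀ i, 0 < wSp i)
    (O : Ω → ℝ)
    (hO : ∀ ω, O ω = wInv * mInv ω * Y ω + ∑ i, wSp i * mSp i ω * Z i ω)
    (ℓ : ℝ)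
    (hℓ : ℓ = (1 / 2) * ∫ ω, (1 - Y ω * Real.sign (O ω)) ∂μ)
    (hO0 : μ {ω | O ω = 0} = 0) :
    ℓ ≤ 2 * Real.exp (-2 * (πInv + (2 * p - 1) * ∑ i, (wSp i / wInv) * πSp i) ^ 2 /
          (4 * (∑ i, (wSp i / wInv) ^ 2) + 1)) := by
  classical
  obtain ⟨Sap, hSap⟩ : ∃ x : ℝ, x = ∑ i, (wSp i / wInv) * πSp i := ⟨_, rfl⟩
  obtain ⟨Sa2, hSa2⟩ : ∃ x : ℝ, x = ∑ i, (wSp i / wInv) ^ 2 := ⟨_, rfl⟩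
  obtain ⟨μb, hμb⟩ : ∃ x : ℝ, x = πInv + (2 * p - 1) * Sap := ⟨_, rfl⟩
  obtain ⟨Cc, hCc⟩ : ∃ x : ℝ, x = 4 * Sa2 + 1 := ⟨_, rfl⟩
  obtain ⟨t, htdef⟩ : ∃ x : ℝ, x = 4 * μb / Cc := ⟨_, rfl⟩
  have hSapnn : 0 ≤ Sap := by
    rw [hSap]
    exact Finset.sum_nonneg fun i _ => mul_nonneg (div_pos (hwSp i) hwInv).le (hπSp0 i)
  have hSa2nn : 0 ≤ Sa2 := by
    rw [hSa2]; exact Finset.sum_nonneg fun i _ => sq_nonneg _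
  have hCc0 : 0 < Cc := by rw [hCc]; linarith
  have hμb0 : 0 ≤ μb := by rw [hμb]; nlinarith
  have ht0 : 0 ≤ t := by rw [htdef]; positivity
  -- measure-theoretic reduction
  have hμA : ∀ k : Stmt2Aux.K D, μ (Stmt2Aux.Aset Y Z mInv mSp k)
      = ENNReal.ofReal (Stmt2Aux.Wt p πInv πSp k) := by
    rintro ⟨y, ε, a, c⟩
    exact hlaw y ε a c
  have hWnn : ∀ k : Stmt2Aux.K D, 0 ≤ Stmt2Aux.Wt p πInv πSp k :=
    fun k => Stmt2Aux.Wt_nonneg (by linarith) hp1 hπInv0 hπInv1 hπSp0 hπSp1 k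
  have hval : ∀ (k : Stmt2Aux.K D) (ω : Ω), ω ∈ Stmt2Aux.Aset Y Z mInv mSp k →
      1 - Y ω * Real.sign (O ω) = Stmt2Aux.valk wInv wSp k := by
    intro k ω hk
    have h1 : Y ω = Stmt2Aux.bs k.1 := hk.1
    have h2 : O ω = Stmt2Aux.Ov wInv wSp k := by rw [hO ω]; exact Stmt2Aux.O_eq hk
    rw [Stmt2Aux.valk, h1, h2]
  have hint : ∫ ω, (1 - Y ω * Real.sign (O ω)) ∂μ
      = ∑ k : Stmt2Aux.K D, Stmt2Aux.Wt p πInv πSp k * Stmt2Aux.valk wInv wSp k :=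
    integral_partition μ (Stmt2Aux.Aset Y Z mInv mSp)
      (fun k => Stmt2Aux.Aset_measurable hY hZ hmInv hmSp k)
      (fun k k' ω h h' => Stmt2Aux.Aset_disjoint h h')
      (Stmt2Aux.Wt p πInv πSp) hWnn hμA (Stmt2Aux.Wt_sum p πInv πSp)
      (fun ω => 1 - Y ω * Real.sign (O ω)) (Stmt2Aux.valk wInv wSp) hval
  -- Chernoff
  have hchain : (∑ k : Stmt2Aux.K D, Stmt2Aux.Wt p πInv πSp k * Stmt2Aux.valk wInv wSp k)
      ≤ 2 * ∑ k : Stmt2Aux.K D,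
          Stmt2Aux.Wt p πInv πSp k * Real.exp (-t * Stmt2Aux.Tv (fun i => wSp i / wInv) k) := by
    rw [Finset.mul_sum]
    exact Finset.sum_le_sum fun k _ => Stmt2Aux.termwise hwInv ht0 k (hWnn k)
  have hchern := Stmt2Aux.chern_sum p πInv t πSp (fun i => wSp i / wInv)
  -- per-factor bounds
  have hAbound : (1 - πInv) + πInv * Real.exp (-t)
      ≤ Real.exp (πInv * (-t) + (-t) ^ 2 / 8) := hoeff2 hπInv0 hπInv1 (-t)
  have hBbound : ∀ i : Fin D, (1 - πSp i) + πSp i *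
        (p * Real.exp (-(t * (wSp i / wInv))) + (1 - p) * Real.exp (t * (wSp i / wInv)))
      ≤ Real.exp (πSp i * (2 * p - 1) * (-(t * (wSp i / wInv)))
          + (-(t * (wSp i / wInv))) ^ 2 / 2) := by
    intro i
    have := hoeff3 (hπSp0 i) (hπSp1 i) hp.le hp1 (-(t * (wSp i / wInv)))
    rwa [neg_neg] at this
  have hBnn : ∀ i : Fin D, 0 ≤ (1 - πSp i) + πSp i *
      (p * Real.exp (-(t * (wSp i / wInv))) + (1 - p) * Real.exp (t * (wSp i / wInv))) := by
    intro i
    have e1 := (Real.exp_pos (-(t * (wSp i / wInv)))).le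
    have e2 := (Real.exp_pos (t * (wSp i / wInv))).le
    have h1 := hπSp1 i
    have h0 := hπSp0 i
    nlinarith [mul_nonneg (mul_nonneg (by linarith : (0:ℝ) ≤ p) e1) h0,
      mul_nonneg (mul_nonneg (by linarith : (0:ℝ) ≤ 1 - p) e2) h0]
  have hAnn : 0 ≤ (1 - πInv) + πInv * Real.exp (-t) := by
    have := (Real.exp_pos (-t)).le
    nlinarith [mul_nonneg hπInv0 this]
  have hprodle : (∏ i, ((1 - πSp i) + πSp i *
        (p * Real.exp (-(t * (wSp i / wInv))) + (1 - p) * Real.exp (t * (wSp i / wInv)))))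
      ≤ ∏ i, Real.exp (πSp i * (2 * p - 1) * (-(t * (wSp i / wInv)))
          + (-(t * (wSp i / wInv))) ^ 2 / 2) :=
    Finset.prod_le_prod (fun i _ => hBnn i) (fun i _ => hBbound i)
  have hmul : ((1 - πInv) + πInv * Real.exp (-t)) *
      (∏ i, ((1 - πSp i) + πSp i *
        (p * Real.exp (-(t * (wSp i / wInv))) + (1 - p) * Real.exp (t * (wSp i / wInv)))))
      ≤ Real.exp (πInv * (-t) + (-t) ^ 2 / 8) *
        ∏ i, Real.exp (πSp i * (2 * p - 1) * (-(t * (wSp i / wInv)))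
          + (-(t * (wSp i / wInv))) ^ 2 / 2) :=
    mul_le_mul hAbound hprodle (Finset.prod_nonneg fun i _ => hBnn i) (Real.exp_pos _).le
  -- collapse exponentials
  have hexpcollapse : Real.exp (πInv * (-t) + (-t) ^ 2 / 8) *
      (∏ i, Real.exp (πSp i * (2 * p - 1) * (-(t * (wSp i / wInv)))
        + (-(t * (wSp i / wInv))) ^ 2 / 2))
      = Real.exp (-2 * μb ^ 2 / Cc) := by
    rw [← Real.exp_sum, ← Real.exp_add]
    congr 1
    have hsumsplit : (∑ i : Fin D, (πSp i * (2 * p - 1) * (-(t * (wSp i / wInv)))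
        + (-(t * (wSp i / wInv))) ^ 2 / 2))
        = (-(t * (2 * p - 1))) * Sap + (t ^ 2 / 2) * Sa2 := by
      rw [hSap, hSa2, Finset.mul_sum, Finset.mul_sum, ← Finset.sum_add_distrib]
      exact Finset.sum_congr rfl fun i _ => by ring
    rw [hsumsplit, htdef]
    rw [hμb, hCc]
    field_simp
    ring
  -- final chain
  have hfinal : ℓ ≤ Real.exp (-2 * μb ^ 2 / Cc) := by
    calc ℓ = (1 / 2) * ∫ ω, (1 - Y ω * Real.sign (O ω)) ∂μ := hℓ
      _ = (1 / 2) * ∑ k : Stmt2Aux.K D,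
            Stmt2Aux.Wt p πInv πSp k * Stmt2Aux.valk wInv wSp k := by rw [hint]
      _ ≤ (1 / 2) * (2 * ∑ k : Stmt2Aux.K D,
            Stmt2Aux.Wt p πInv πSp k * Real.exp (-t * Stmt2Aux.Tv (fun i => wSp i / wInv) k)) :=
          mul_le_mul_of_nonneg_left hchain (by norm_num)
      _ = ∑ k : Stmt2Aux.K D,
            Stmt2Aux.Wt p πInv πSp k * Real.exp (-t * Stmt2Aux.Tv (fun i => wSp i / wInv) k) := by
          ring
      _ = ((1 - πInv) + πInv * Real.exp (-t)) *
          ∏ i, ((1 - πSp i) + πSp i *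
            (p * Real.exp (-(t * (wSp i / wInv))) + (1 - p) * Real.exp (t * (wSp i / wInv)))) :=
          hchern
      _ ≤ Real.exp (πInv * (-t) + (-t) ^ 2 / 8) *
          ∏ i, Real.exp (πSp i * (2 * p - 1) * (-(t * (wSp i / wInv)))
            + (-(t * (wSp i / wInv))) ^ 2 / 2) := hmul
      _ = Real.exp (-2 * μb ^ 2 / Cc) := hexpcollapse
  rw [← hSap, ← hSa2, ← hμb, ← hCc]
  have := Real.exp_pos (-2 * μb ^ 2 / Cc)
  linarith
end

section
/- (Theorem 2, training bound with the mixture distribution) If 0 ≤ φ ≤ 1 - 1/(2p), then the classification error satisfies ℓ ≤ 2·exp( -2·(π_inv + (2p(1-φ) - 1)·Σ_{i=1}^D α_i·π_{sp,i})² / (4·Σ_{i=1}^D α_i² + 1) ), where α_i = w_{sp,i}/w_inv. -/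
open Real Finset MeasureTheory



/-- A function vanishing at 0, with derivative nonpos left of 0 and nonneg right of 0,
is nonnegative. -/
lemma nonneg_of_hasDerivAt (f f' : ℝ → ℝ) (hf : ∀ x, HasDerivAt f (f' x) x)
    (h0 : f 0 = 0) (hpos : ∀ x, 0 ≤ x → 0 ≤ f' x) (hneg : ∀ x, x ≤ 0 → f' x ≤ 0) :
    ∀ u, 0 ≤ f u := by
  have hdiff : Differentiable ℝ f := fun x => (hf x).differentiableAt
  have hderiv : ∀ x, deriv f x = f' x := fun x => (hf x).deriv
  intro u
  rcases le_or_gt 0 u with hu | hu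
  · have hmono : MonotoneOn f (Set.Ici (0:ℝ)) := by
      apply monotoneOn_of_deriv_nonneg (convex_Ici 0) hdiff.continuous.continuousOn
        hdiff.differentiableOn
      intro x hx
      rw [interior_Ici] at hx
      rw [hderiv]
      exact hpos x (le_of_lt hx)
    have := hmono (Set.self_mem_Ici) hu hu
    simpa [h0] using this
  · have hanti : AntitoneOn f (Set.Iic (0:ℝ)) := by
      apply antitoneOn_of_deriv_nonpos (convex_Iic 0) hdiff.continuous.continuousOn
        hdiff.differentiableOn
      intro x hx
      rw [interior_Iic] at hx
      rw [hderiv]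
      exact hneg x (le_of_lt hx)
    have := hanti (Set.mem_Iic.2 hu.le) (Set.self_mem_Iic) hu.le
    simpa [h0] using this

lemma den_pos (m u : ℝ) (hm : |m| ≤ 1) : 0 < Real.cosh u + m * Real.sinh u := by
  rcases abs_le.1 hm with ⟨hm1, hm2⟩
  rcases le_or_gt 0 (Real.sinh u) with hs | hs
  · have : Real.cosh u + m * Real.sinh u ≥ Real.cosh u + (-1) * Real.sinh u := by nlinarith
    have h2 : Real.cosh u - Real.sinh u = Real.exp (-u) := Real.cosh_sub_sinh u
    nlinarith [Real.exp_pos (-u)]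
  · have : Real.cosh u + m * Real.sinh u ≥ Real.cosh u + 1 * Real.sinh u := by nlinarith
    have h2 : Real.cosh u + Real.sinh u = Real.exp u := Real.cosh_add_sinh u
    nlinarith [Real.exp_pos u]

/-- Hoeffding core inequality. -/
lemma hoeff_core (m : ℝ) (hm : |m| ≤ 1) (u : ℝ) :
    Real.cosh u + m * Real.sinh u ≤ Real.exp (m * u + u ^ 2 / 2) := by
  set den : ℝ → ℝ := fun u => Real.cosh u + m * Real.sinh u with hden_def
  set num : ℝ → ℝ := fun u => Real.sinh u + m * Real.cosh u with hnum_def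
  have hden : ∀ u, 0 < den u := fun u => den_pos m u hm
  have hden_deriv : ∀ u, HasDerivAt den (num u) u := by
    intro u
    have h1 := Real.hasDerivAt_cosh u
    have h2 := (Real.hasDerivAt_sinh u).const_mul m
    simpa [hnum_def, mul_comm] using h1.fun_add h2
  have hnum_deriv : ∀ u, HasDerivAt num (den u) u := by
    intro u
    have h1 := Real.hasDerivAt_sinh u
    have h2 := (Real.hasDerivAt_cosh u).const_mul m
    simpa [hden_def, mul_comm] using h1.fun_add h2
  -- g and its derivative g1
  set g : ℝ → ℝ := fun u => m * u + u ^ 2 / 2 - Real.log (den u) with hg_def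
  set g1 : ℝ → ℝ := fun u => m + u - num u / den u with hg1_def
  have hg_deriv : ∀ u, HasDerivAt g (g1 u) u := by
    intro u
    have h1 : HasDerivAt (fun u : ℝ => m * u + u ^ 2 / 2) (m + u) u := by
      have := ((hasDerivAt_pow 2 u).div_const 2).const_add (0:ℝ)
      have h2 := (hasDerivAt_id u).const_mul m
      simpa [mul_comm] using h2.fun_add ((hasDerivAt_pow 2 u).div_const 2)
    have h3 : HasDerivAt (fun u => Real.log (den u)) (num u / den u) u :=
      (hden_deriv u).log (ne_of_gt (hden u))
    simpa [hg_def, hg1_def] using h1.fun_sub h3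
  have key : ∀ u, den u ^ 2 - num u ^ 2 = 1 - m ^ 2 := by
    intro u
    have := Real.cosh_sq_sub_sinh_sq u
    simp only [hden_def, hnum_def]
    nlinarith [this]
  have hg1_deriv : ∀ u, HasDerivAt g1 (num u ^ 2 / den u ^ 2) u := by
    intro u
    have h1 : HasDerivAt (fun u : ℝ => m + u) 1 u := (hasDerivAt_id u).const_add m
    have h2 : HasDerivAt (fun u => num u / den u)
        ((den u * den u - num u * num u) / den u ^ 2) u :=
      (hnum_deriv u).div (hden_deriv u) (ne_of_gt (hden u))
    have h3 := h1.sub h2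
    have heq : 1 - (den u * den u - num u * num u) / den u ^ 2 = num u ^ 2 / den u ^ 2 := by
      have hd2 : (0:ℝ) < den u ^ 2 := pow_pos (hden u) 2
      rw [eq_div_iff (ne_of_gt hd2), sub_mul, div_mul_cancel₀ _ (ne_of_gt hd2)]; ring
    rw [heq] at h3
    exact h3
  have hg1_mono : Monotone g1 :=
    monotone_of_deriv_nonneg (fun x => (hg1_deriv x).differentiableAt)
      (fun x => by rw [(hg1_deriv x).deriv]; exact div_nonneg (sq_nonneg _) (sq_nonneg _))
  have hg1_zero : g1 0 = 0 := by
    simp [hg1_def, hnum_def, hden_def]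
  have hg_nonneg : ∀ u, 0 ≤ g u := by
    apply nonneg_of_hasDerivAt g g1 hg_deriv
    · simp [hg_def, hden_def]
    · intro x hx; rw [← hg1_zero]; exact hg1_mono hx
    · intro x hx; rw [← hg1_zero]; exact hg1_mono hx
  have := hg_nonneg u
  rw [hg_def] at this
  have hlog : Real.log (den u) ≤ m * u + u ^ 2 / 2 := by linarith
  calc den u ≤ Real.exp (Real.log (den u)) := le_of_eq (Real.exp_log (hden u)).symm
    _ ≤ Real.exp (m * u + u ^ 2 / 2) := Real.exp_le_exp.2 hlog



/-- Two-point Hoeffding mgf bound. -/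
lemma hoeff_two (θ a b t : ℝ) (h0 : 0 ≤ θ) (h1 : θ ≤ 1) :
    θ * Real.exp (t * b) + (1 - θ) * Real.exp (t * a) ≤
      Real.exp (t * (θ * b + (1 - θ) * a) + t ^ 2 * (b - a) ^ 2 / 8) := by
  set c : ℝ := (a + b) / 2
  set s : ℝ := (b - a) / 2
  set u : ℝ := t * s
  set m : ℝ := 2 * θ - 1
  have hm : |m| ≤ 1 := by rw [abs_le]; constructor <;> simp [m] <;> linarith
  have hid : θ * Real.exp (t * b) + (1 - θ) * Real.exp (t * a) =
      Real.exp (t * c) * (Real.cosh u + m * Real.sinh u) := by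
    have hb : t * b = t * c + u := by simp [c, s, u]; ring
    have ha : t * a = t * c + (-u) := by simp [c, s, u]; ring
    rw [hb, ha, Real.cosh_eq, Real.sinh_eq, Real.exp_add, Real.exp_add]
    ring
  rw [hid]
  have h2 : Real.exp (t * c) * (Real.cosh u + m * Real.sinh u) ≤
      Real.exp (t * c) * Real.exp (m * u + u ^ 2 / 2) :=
    mul_le_mul_of_nonneg_left (hoeff_core m hm u) (le_of_lt (Real.exp_pos _))
  refine h2.trans (le_of_eq ?_)
  rw [← Real.exp_add]
  congr 1
  simp only [c, s, u, m]
  ring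

/-- Chord bound for exp. -/
lemma exp_chord (x a b t : ℝ) (hab : a < b) (hx1 : a ≤ x) (hx2 : x ≤ b) :
    Real.exp (t * x) ≤ (b - x) / (b - a) * Real.exp (t * a) + (x - a) / (b - a) * Real.exp (t * b) := by
  have hba : (0:ℝ) < b - a := by linarith
  have hw1 : 0 ≤ (b - x) / (b - a) := div_nonneg (by linarith) hba.le
  have hw2 : 0 ≤ (x - a) / (b - a) := div_nonneg (by linarith) hba.le
  have hsum : (b - x) / (b - a) + (x - a) / (b - a) = 1 := by field_simp; ring
  have := convexOn_exp.2 (Set.mem_univ (t * a)) (Set.mem_univ (t * b)) hw1 hw2 hsum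
  simp only [smul_eq_mul] at this
  have harg : (b - x) / (b - a) * (t * a) + (x - a) / (b - a) * (t * b) = t * x := by
    field_simp; ring
  rw [harg] at this
  exact this

/-- Three-point Hoeffding mgf bound. -/
lemma hoeff_three (p1 p2 p3 x1 x2 x3 a b t : ℝ)
    (hp1 : 0 ≤ p1) (hp2 : 0 ≤ p2) (hp3 : 0 ≤ p3) (hsum : p1 + p2 + p3 = 1)
    (hab : a < b)
    (h1a : a ≤ x1) (h1b : x1 ≤ b) (h2a : a ≤ x2) (h2b : x2 ≤ b) (h3a : a ≤ x3) (h3b : x3 ≤ b) :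
    p1 * Real.exp (t * x1) + p2 * Real.exp (t * x2) + p3 * Real.exp (t * x3) ≤
      Real.exp (t * (p1 * x1 + p2 * x2 + p3 * x3) + t ^ 2 * (b - a) ^ 2 / 8) := by
  have hba : (0:ℝ) < b - a := by linarith
  have hne : b - a ≠ 0 := ne_of_gt hba
  have hp3' : p3 = 1 - p1 - p2 := by linarith
  subst hp3'
  have hμa : a ≤ p1 * x1 + p2 * x2 + (1 - p1 - p2) * x3 := by
    nlinarith [mul_nonneg hp1 (by linarith : (0:ℝ) ≤ x1 - a),
      mul_nonneg hp2 (by linarith : (0:ℝ) ≤ x2 - a),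
      mul_nonneg hp3 (by linarith : (0:ℝ) ≤ x3 - a)]
  have hμb : p1 * x1 + p2 * x2 + (1 - p1 - p2) * x3 ≤ b := by
    nlinarith [mul_nonneg hp1 (by linarith : (0:ℝ) ≤ b - x1),
      mul_nonneg hp2 (by linarith : (0:ℝ) ≤ b - x2),
      mul_nonneg hp3 (by linarith : (0:ℝ) ≤ b - x3)]
  set θ : ℝ := (p1 * x1 + p2 * x2 + (1 - p1 - p2) * x3 - a) / (b - a) with hθ
  have hθ0 : 0 ≤ θ := div_nonneg (by linarith) hba.le
  have hθ1 : θ ≤ 1 := by rw [hθ, div_le_one hba]; linarith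
  have hθμ : θ * b + (1 - θ) * a = p1 * x1 + p2 * x2 + (1 - p1 - p2) * x3 := by
    rw [hθ]; field_simp; ring
  have c1 := exp_chord x1 a b t hab h1a h1b
  have c2 := exp_chord x2 a b t hab h2a h2b
  have c3 := exp_chord x3 a b t hab h3a h3b
  have e1 := mul_le_mul_of_nonneg_left c1 hp1
  have e2 := mul_le_mul_of_nonneg_left c2 hp2
  have e3 := mul_le_mul_of_nonneg_left c3 hp3
  have key : p1 * ((b - x1) / (b - a) * Real.exp (t * a) + (x1 - a) / (b - a) * Real.exp (t * b))
      + p2 * ((b - x2) / (b - a) * Real.exp (t * a) + (x2 - a) / (b - a) * Real.exp (t * b))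
      + (1 - p1 - p2) * ((b - x3) / (b - a) * Real.exp (t * a) + (x3 - a) / (b - a) * Real.exp (t * b))
      = θ * Real.exp (t * b) + (1 - θ) * Real.exp (t * a) := by
    rw [hθ]; field_simp; ring
  have step1 : p1 * Real.exp (t * x1) + p2 * Real.exp (t * x2)
      + (1 - p1 - p2) * Real.exp (t * x3) ≤
      θ * Real.exp (t * b) + (1 - θ) * Real.exp (t * a) := by
    rw [← key]; linarith
  refine step1.trans ?_
  have := hoeff_two θ a b t hθ0 hθ1
  rwa [hθμ] at this


/-- Weight of a configuration. -/
noncomputable def cfgW {D : ℕ} (q πI : ℝ) (πS : Fin D → ℝ)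
    (s : Bool × (Fin D → Bool) × Bool × (Fin D → Bool)) : ℝ :=
  1 / 2 * (∏ i, if s.2.1 i = s.1 then q else 1 - q) * (if s.2.2.1 then πI else 1 - πI) *
    ∏ i, if s.2.2.2 i then πS i else 1 - πS i

/-- Normalized margin of a configuration. -/
def cfgV {D : ℕ} (α : Fin D → ℝ)
    (s : Bool × (Fin D → Bool) × Bool × (Fin D → Bool)) : ℝ :=
  (if s.2.2.1 then (1 : ℝ) else 0) +
    ∑ i, α i * (if s.2.2.2 i then (1 : ℝ) else 0) * (if s.2.1 i = s.1 then (1 : ℝ) else -1)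

lemma sum_fun_bool {D : ℕ} (f : Fin D → Bool → ℝ) :
    ∑ ε : Fin D → Bool, ∏ i, f i (ε i) = ∏ i, (f i true + f i false) := by
  rw [← Fintype.prod_sum]
  simp [Fintype.sum_bool]

lemma cfg_factorize {D : ℕ} (q πI : ℝ) (πS α : Fin D → ℝ) (t : ℝ) :
    ∑ s, cfgW q πI πS s * Real.exp (-t * cfgV α s) =
      (πI * Real.exp (-t) + (1 - πI)) *
        ∏ i, (πS i * (q * Real.exp (-(t * α i)) + (1 - q) * Real.exp (t * α i)) + (1 - πS i)) := by
  classical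
  have key : ∀ y : Bool,
      (∑ r : (Fin D → Bool) × Bool × (Fin D → Bool),
        cfgW q πI πS (y, r) * Real.exp (-t * cfgV α (y, r))) =
      (1 / 2) * ((πI * Real.exp (-t) + (1 - πI)) *
        ∏ i, (πS i * (q * Real.exp (-(t * α i)) + (1 - q) * Real.exp (t * α i)) + (1 - πS i))) := by
    intro y
    set Φ : Fin D → Bool → Bool → ℝ := fun i e cb =>
      ((if e = y then q else 1 - q) * (if cb then πS i else 1 - πS i)) *
        Real.exp (-(t * (α i * (if cb then (1:ℝ) else 0) * (if e = y then (1:ℝ) else -1)))) with hΦ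
    set C : Bool → ℝ := fun a =>
      1 / 2 * ((if a then πI else 1 - πI) * Real.exp (-t * (if a then (1:ℝ) else 0))) with hC
    have point : ∀ (ε : Fin D → Bool) (a : Bool) (c : Fin D → Bool),
        cfgW q πI πS (y, ε, a, c) * Real.exp (-t * cfgV α (y, ε, a, c)) =
        C a * ∏ i, Φ i (ε i) (c i) := by
      intro ε a c
      simp only [cfgW, cfgV, hΦ, hC]
      have harg : -t * ((if a then (1:ℝ) else 0) +
          ∑ i, α i * (if c i then (1:ℝ) else 0) * (if ε i = y then (1:ℝ) else -1)) =
          -t * (if a then (1:ℝ) else 0) +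
          ∑ i, (-(t * (α i * (if c i then (1:ℝ) else 0) * (if ε i = y then (1:ℝ) else -1)))) := by
        rw [mul_add, Finset.mul_sum]
        congr 1
        exact Finset.sum_congr rfl fun i _ => by ring
      rw [harg, Real.exp_add, Real.exp_sum]
      rw [Finset.prod_mul_distrib, Finset.prod_mul_distrib]
      ring
    have step1 : (∑ r : (Fin D → Bool) × Bool × (Fin D → Bool),
        cfgW q πI πS (y, r) * Real.exp (-t * cfgV α (y, r))) =
        ∑ ε : Fin D → Bool, ∑ a : Bool, ∑ c : Fin D → Bool, C a * ∏ i, Φ i (ε i) (c i) := by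
      rw [Fintype.sum_prod_type]
      refine Finset.sum_congr rfl fun ε _ => ?_
      rw [Fintype.sum_prod_type]
      exact Finset.sum_congr rfl fun a _ => Finset.sum_congr rfl fun c _ => point ε a c
    have step2 : (∑ ε : Fin D → Bool, ∑ a : Bool, ∑ c : Fin D → Bool,
          C a * ∏ i, Φ i (ε i) (c i)) =
        ∑ ε : Fin D → Bool, ∑ a : Bool, C a * ∏ i, (Φ i (ε i) true + Φ i (ε i) false) := by
      refine Finset.sum_congr rfl fun ε _ => Finset.sum_congr rfl fun a _ => ?_
      rw [← Finset.mul_sum, sum_fun_bool (fun i b => Φ i (ε i) b)]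
    have step3 : (∑ ε : Fin D → Bool, ∑ a : Bool,
          C a * ∏ i, (Φ i (ε i) true + Φ i (ε i) false)) =
        (∑ a : Bool, C a) * ∑ ε : Fin D → Bool, ∏ i, (Φ i (ε i) true + Φ i (ε i) false) := by
      rw [Finset.sum_comm, ← Finset.sum_mul_sum]
    have step4 : (∑ ε : Fin D → Bool, ∏ i, (Φ i (ε i) true + Φ i (ε i) false)) =
        ∏ i, ((Φ i true true + Φ i true false) + (Φ i false true + Φ i false false)) :=
      sum_fun_bool (fun i b => Φ i b true + Φ i b false)
    have hCsum : (∑ a : Bool, C a) = 1 / 2 * (πI * Real.exp (-t) + (1 - πI)) := by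
      rw [Fintype.sum_bool]
      simp only [hC, if_true, if_false]
      norm_num
      ring
    have hΦsum : ∀ i, ((Φ i true true + Φ i true false) + (Φ i false true + Φ i false false)) =
        πS i * (q * Real.exp (-(t * α i)) + (1 - q) * Real.exp (t * α i)) + (1 - πS i) := by
      intro i
      cases y <;>
        simp only [hΦ, if_true, if_false, Bool.true_eq_false, Bool.false_eq_true,
          mul_one, mul_zero, zero_mul, neg_zero, Real.exp_zero, mul_neg, neg_neg] <;>
        ring_nf <;>
        ring
    rw [step1, step2, step3, step4, hCsum]
    rw [Finset.prod_congr rfl fun i _ => hΦsum i]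
    ring
  rw [Fintype.sum_prod_type, Fintype.sum_bool, key true, key false]
  ring

lemma boolval_pm_inj {b b' : Bool} (h : (if b then (1:ℝ) else -1) = (if b' then 1 else -1)) :
    b = b' := by
  cases b <;> cases b' <;> first | rfl | (exfalso; norm_num at h)

lemma boolval_01_inj {b b' : Bool} (h : (if b then (1:ℝ) else 0) = (if b' then 1 else 0)) :
    b = b' := by
  cases b <;> cases b' <;> first | rfl | (exfalso; norm_num at h)

set_option maxHeartbeats 1000000 in
/-- **Theorem 2, training bound with the mixture distribution.** -/
theorem stmt_7
    {Ω : Type*} [MeasurableSpace Ω] (μ : MeasureTheory.Measure Ω)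
    [MeasureTheory.IsProbabilityMeasure μ]
    (D : ℕ) (hD : 0 < D) (p : ℝ) (hp : 1 / 2 < p) (hp1 : p ≤ 1)
    (φ : ℝ) (hφ0 : 0 ≤ φ) (hφ1 : φ ≤ 1)
    (πInv : ℝ) (πSp : Fin D → ℝ)
    (hπInv0 : 0 ≤ πInv) (hπInv1 : πInv ≤ 1)
    (hπSp0 : ∀ i, 0 ≤ πSp i) (hπSp1 : ∀ i, πSp i ≤ 1)
    (Y : Ω → ℝ) (Z : Fin D → Ω → ℝ) (mInv : Ω → ℝ) (mSp : Fin D → Ω → ℝ)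
    (hY : Measurable Y) (hZ : ∀ i, Measurable (Z i))
    (hmInv : Measurable mInv) (hmSp : ∀ i, Measurable (mSp i))
    -- joint law: `Y` uniform on `{-1,1}`; given `Y`, `Z i` i.i.d. with the mixture law;
    -- masks Bernoulli, mutually independent and independent of `(Y, Z)`.
    (hlaw : ∀ (y : Bool) (ε : Fin D → Bool) (a : Bool) (c : Fin D → Bool),
      μ {ω | Y ω = (if y then (1 : ℝ) else -1) ∧
             (∀ i, Z i ω = (if ε i then (1 : ℝ) else -1)) ∧
             mInv ω = (if a then (1 : ℝ) else 0) ∧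
             (∀ i, mSp i ω = (if c i then (1 : ℝ) else 0))} =
        ENNReal.ofReal ((1 / 2) *
          (∏ i, (if ε i = y then (1 - φ) * p else φ + (1 - φ) * (1 - p))) *
          (if a then πInv else 1 - πInv) *
          (∏ i, (if c i then πSp i else 1 - πSp i))))
    (wInv : ℝ) (hwInv : 0 < wInv) (wSp : Fin D → ℝ) (hwSp : ∀ i, 0 < wSp i)
    (O : Ω → ℝ)
    (hO : ∀ ω, O ω = wInv * mInv ω * Y ω + ∑ i, wSp i * mSp i ω * Z i ω)
    (ℓ : ℝ)
    (hℓ : ℓ = (1 / 2) * ∫ ω, (1 - Y ω * Real.sign (O ω)) ∂μ)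
    (hO0 : μ {ω | O ω = 0} = 0)
    (hφub : φ ≤ 1 - 1 / (2 * p)) :
    ℓ ≤ 2 * Real.exp
        (-2 * (πInv + (2 * p * (1 - φ) - 1) * ∑ i, (wSp i / wInv) * πSp i) ^ 2 /
          (4 * (∑ i, (wSp i / wInv) ^ 2) + 1)) := by
  classical
  set q : ℝ := (1 - φ) * p with hq
  set α : Fin D → ℝ := fun i => wSp i / wInv with hα
  have hq0 : 0 ≤ q := mul_nonneg (by linarith) (by linarith)
  have hq1 : q ≤ 1 := by nlinarith
  have hαpos : ∀ i, 0 < α i := fun i => div_pos (hwSp i) hwInv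
  have hWnonneg : ∀ s, 0 ≤ cfgW q πInv πSp s := by
    intro s
    unfold cfgW
    apply mul_nonneg (mul_nonneg (mul_nonneg (by norm_num) ?_) ?_) ?_
    · exact Finset.prod_nonneg fun i _ => by split_ifs <;> linarith
    · split_ifs <;> linarith
    · exact Finset.prod_nonneg fun i _ => by split_ifs <;> [exact hπSp0 i; linarith [hπSp1 i]]
  -- atoms
  set atom : Bool × (Fin D → Bool) × Bool × (Fin D → Bool) → Set Ω := fun s =>
    {ω | Y ω = (if s.1 then (1:ℝ) else -1) ∧ (∀ i, Z i ω = (if s.2.1 i then (1:ℝ) else -1)) ∧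
         mInv ω = (if s.2.2.1 then (1:ℝ) else 0) ∧
         (∀ i, mSp i ω = (if s.2.2.2 i then (1:ℝ) else 0))} with hatom
  have hatom_meas : ∀ s, MeasurableSet (atom s) := by
    intro s
    have h1 : MeasurableSet {ω | Y ω = (if s.1 then (1:ℝ) else -1)} :=
      hY (measurableSet_singleton _)
    have h2 : MeasurableSet {ω | ∀ i, Z i ω = (if s.2.1 i then (1:ℝ) else -1)} := by
      rw [Set.setOf_forall]
      exact MeasurableSet.iInter fun i => (hZ i) (measurableSet_singleton _)
    have h3 : MeasurableSet {ω | mInv ω = (if s.2.2.1 then (1:ℝ) else 0)} :=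
      hmInv (measurableSet_singleton _)
    have h4 : MeasurableSet {ω | ∀ i, mSp i ω = (if s.2.2.2 i then (1:ℝ) else 0)} := by
      rw [Set.setOf_forall]
      exact MeasurableSet.iInter fun i => (hmSp i) (measurableSet_singleton _)
    exact h1.inter (h2.inter (h3.inter h4))
  have hatom_measure : ∀ s, μ (atom s) = ENNReal.ofReal (cfgW q πInv πSp s) := by
    rintro ⟨y, ε, a, c⟩
    have hPc : (∏ i, if ε i = y then (1 - φ) * p else φ + (1 - φ) * (1 - p)) =
        (∏ i, if ε i = y then q else 1 - q) :=
      Finset.prod_congr rfl fun i _ => by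
        split_ifs with h
        · rfl
        · rw [hq]; ring
    refine (hlaw y ε a c).trans (congrArg ENNReal.ofReal ?_)
    unfold cfgW
    dsimp only
    rw [hPc]
  have hdisj : Pairwise (Function.onFun Disjoint atom) := by
    intro s s' hne
    rw [Function.onFun, Set.disjoint_left]
    rintro ω ⟨h1, h2, h3, h4⟩ ⟨h1', h2', h3', h4'⟩
    apply hne
    obtain ⟨y, ε, a, c⟩ := s
    obtain ⟨y', ε', a', c'⟩ := s'
    dsimp only at h1 h2 h3 h4 h1' h2' h3' h4'
    have hy : y = y' := boolval_pm_inj (h1 ▸ h1')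
    have ha : a = a' := boolval_01_inj (h3 ▸ h3')
    have hε : ε = ε' := funext fun i => boolval_pm_inj ((h2 i) ▸ (h2' i))
    have hc : c = c' := funext fun i => boolval_01_inj ((h4 i) ▸ (h4' i))
    rw [hy, ha, hε, hc]
  have hsum_one : ∑ s, cfgW q πInv πSp s = 1 := by
    have h := cfg_factorize q πInv πSp α 0
    have hL : ∑ s, cfgW q πInv πSp s * Real.exp (-0 * cfgV α s) = ∑ s, cfgW q πInv πSp s :=
      Finset.sum_congr rfl fun s _ => by norm_num
    have hterm : ∀ i : Fin D, πSp i * (q * Real.exp (-(0 * α i)) + (1 - q) * Real.exp (0 * α i))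
        + (1 - πSp i) = 1 := fun i => by norm_num
    rw [hL] at h
    rw [h, Finset.prod_congr rfl fun i _ => hterm i, Finset.prod_const_one]
    norm_num
  have htotal : μ (⋃ s, atom s) = 1 := by
    rw [measure_iUnion hdisj hatom_meas, tsum_fintype]
    rw [Finset.sum_congr rfl fun s _ => hatom_measure s]
    rw [← ENNReal.ofReal_sum_of_nonneg fun s _ => hWnonneg s]
    rw [hsum_one]
    exact ENNReal.ofReal_one
  have hUmeas : MeasurableSet (⋃ s, atom s) := MeasurableSet.iUnion hatom_meas
  have hcompl : μ ((⋃ s, atom s)ᶜ) = 0 := by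
    rw [measure_compl hUmeas (measure_ne_top μ _), htotal, measure_univ, tsub_self]
  have haeU : ∀ᵐ ω ∂μ, ω ∈ ⋃ s, atom s := by
    rw [MeasureTheory.ae_iff]
    have hset : {ω | ¬ ω ∈ ⋃ s, atom s} = (⋃ s, atom s)ᶜ := rfl
    rw [hset]
    exact hcompl
  -- the bad set
  set badF : Finset (Bool × (Fin D → Bool) × Bool × (Fin D → Bool)) :=
    Finset.univ.filter (fun s => cfgV α s ≤ 0) with hbadF
  set Bad : Set Ω := ⋃ s ∈ badF, atom s with hBad
  have hBad_meas : MeasurableSet Bad :=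
    MeasurableSet.biUnion (Finset.countable_toSet badF) fun s _ => hatom_meas s
  set B : ℝ := ∑ s ∈ badF, cfgW q πInv πSp s with hBdef
  have hB0 : 0 ≤ B := Finset.sum_nonneg fun s _ => hWnonneg s
  have hμBad : (μ Bad).toReal ≤ B := by
    have h1 : μ Bad ≤ ∑ s ∈ badF, μ (atom s) := measure_biUnion_finset_le badF atom
    rw [Finset.sum_congr rfl fun s _ => hatom_measure s,
      ← ENNReal.ofReal_sum_of_nonneg fun s _ => hWnonneg s] at h1
    exact ENNReal.toReal_le_of_le_ofReal hB0 h1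
  -- value of Y * O on an atom
  have hYO : ∀ s : Bool × (Fin D → Bool) × Bool × (Fin D → Bool), ∀ ω ∈ atom s,
      Y ω * O ω = wInv * cfgV α s := by
    rintro ⟨y, ε, a, c⟩ ω ⟨h1, h2, h3, h4⟩
    dsimp only at h1 h2 h3 h4
    have hw : ∀ i, wInv * α i = wSp i := fun i => by
      rw [hα]; field_simp
    rw [hO ω, h1, h3, mul_add]
    unfold cfgV
    dsimp only
    rw [mul_add, Finset.mul_sum, Finset.mul_sum]
    congr 1
    · cases a <;> cases y <;> norm_num
    · refine Finset.sum_congr rfl fun i _ => ?_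
      rw [h2 i, h4 i, ← hw i]
      rcases Bool.eq_false_or_eq_true (ε i) with he | he <;>
        rcases Bool.eq_false_or_eq_true (c i) with hc | hc <;>
          cases y <;> simp only [he, hc] <;> norm_num
  -- pointwise bound on atoms
  have hY1 : ∀ s : Bool × (Fin D → Bool) × Bool × (Fin D → Bool), ∀ ω ∈ atom s,
      Y ω = 1 ∨ Y ω = -1 := by
    rintro ⟨y, ε, a, c⟩ ω ⟨h1, -, -, -⟩
    dsimp only at h1
    cases y
    · right; rw [h1]; norm_num
    · left; rw [h1]; norm_num
  have hpt : ∀ ω ∈ ⋃ s, atom s,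
      1 - Y ω * Real.sign (O ω) ≤ Bad.indicator (fun _ => (2:ℝ)) ω := by
    intro ω hω
    obtain ⟨s, hs⟩ : ∃ s, ω ∈ atom s := Set.mem_iUnion.1 hω
    by_cases hV : cfgV α s ≤ 0
    · have hmem : ω ∈ Bad := by
        rw [hBad]
        simp only [Set.mem_iUnion]
        exact ⟨s, by simp [hbadF, hV], hs⟩
      rw [Set.indicator_of_mem hmem]
      rcases Real.sign_apply_eq (O ω) with h | h | h <;> rcases hY1 s ω hs with h' | h' <;>
        rw [h, h'] <;> norm_num
    · push_neg at hV
      have hpos : 0 < Y ω * O ω := by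
        rw [hYO s ω hs]; exact mul_pos hwInv hV
      have hsign : Y ω * Real.sign (O ω) = 1 := by
        rcases hY1 s ω hs with h' | h'
        · rw [h'] at hpos ⊢
          rw [one_mul] at hpos
          rw [Real.sign_of_pos hpos, one_mul]
        · rw [h'] at hpos ⊢
          have : O ω < 0 := by nlinarith
          rw [Real.sign_of_neg this]; norm_num
      rw [hsign]
      have : (0:ℝ) ≤ Bad.indicator (fun _ => (2:ℝ)) ω :=
        Set.indicator_nonneg (fun _ _ => by norm_num) ω
      linarith
  -- measurability and integrability
  have hOmeas : Measurable O := by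
    have hOe : O = fun ω => wInv * mInv ω * Y ω + ∑ i, wSp i * mSp i ω * Z i ω := funext hO
    rw [hOe]
    exact ((measurable_const.mul hmInv).mul hY).add
      (Finset.measurable_sum _ fun i _ => (measurable_const.mul (hmSp i)).mul (hZ i))
  have hsign_meas : Measurable Real.sign := by
    have h : Real.sign = fun r : ℝ => if r < 0 then (-1:ℝ) else if 0 < r then 1 else 0 :=
      funext fun r => rfl
    rw [h]
    exact Measurable.ite (measurableSet_lt measurable_id measurable_const) measurable_const
      (Measurable.ite (measurableSet_lt measurable_const measurable_id) measurable_const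
        measurable_const)
  have hfmeas : Measurable (fun ω => 1 - Y ω * Real.sign (O ω)) :=
    measurable_const.sub (hY.mul (hsign_meas.comp hOmeas))
  have habs : ∀ᵐ ω ∂μ, ‖1 - Y ω * Real.sign (O ω)‖ ≤ 2 := by
    filter_upwards [haeU] with ω hω
    obtain ⟨s, hs⟩ := Set.mem_iUnion.1 hω
    rcases hY1 s ω hs with h' | h' <;> rcases Real.sign_apply_eq (O ω) with h | h | h <;>
      rw [h, h'] <;> norm_num [Real.norm_eq_abs]
  have hf_int : MeasureTheory.Integrable (fun ω => 1 - Y ω * Real.sign (O ω)) μ :=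
    MeasureTheory.Integrable.mono' (MeasureTheory.integrable_const 2)
      hfmeas.aestronglyMeasurable habs
  have hg_int : MeasureTheory.Integrable (Bad.indicator fun _ => (2:ℝ)) μ :=
    (MeasureTheory.integrable_const (2:ℝ)).indicator hBad_meas
  have hae_le : (fun ω => 1 - Y ω * Real.sign (O ω)) ≤ᵐ[μ] Bad.indicator fun _ => (2:ℝ) := by
    filter_upwards [haeU] with ω hω using hpt ω hω
  have hint : ∫ ω, (1 - Y ω * Real.sign (O ω)) ∂μ ≤ ∫ ω, Bad.indicator (fun _ => (2:ℝ)) ω ∂μ :=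
    MeasureTheory.integral_mono_ae hf_int hg_int hae_le
  have hgval : ∫ ω, Bad.indicator (fun _ => (2:ℝ)) ω ∂μ = (μ Bad).toReal * 2 := by
    rw [MeasureTheory.integral_indicator_const (2:ℝ) hBad_meas, smul_eq_mul]; rfl
  have hlB : ℓ ≤ B := by
    rw [hℓ]
    calc 1/2 * ∫ ω, (1 - Y ω * Real.sign (O ω)) ∂μ ≤ 1/2 * ((μ Bad).toReal * 2) := by
          refine mul_le_mul_of_nonneg_left ?_ (by norm_num)
          rw [← hgval]; exact hint
      _ = (μ Bad).toReal := by ring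
      _ ≤ B := hμBad
  -- Chernoff bound
  set A2 : ℝ := ∑ i, α i ^ 2 with hA2
  set SP : ℝ := ∑ i, α i * πSp i with hSP
  set cc : ℝ := 2 * q - 1 with hcc
  set M : ℝ := πInv + cc * SP with hM
  set R : ℝ := 4 * A2 + 1 with hR
  have hA2_0 : 0 ≤ A2 := Finset.sum_nonneg fun i _ => sq_nonneg _
  have hR0 : (0:ℝ) < R := by rw [hR]; linarith
  have hcc0 : 0 ≤ cc := by
    rw [hcc, hq]
    have hp0 : (0:ℝ) < p := by linarith
    have h2p : (0:ℝ) < 2 * p := by linarith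
    have h1 : 1/(2*p) ≤ 1 - φ := by linarith
    have h2 : (1/(2*p)) * (2*p) ≤ (1-φ) * (2*p) := mul_le_mul_of_nonneg_right h1 h2p.le
    rw [one_div, inv_mul_cancel₀ (ne_of_gt h2p)] at h2
    nlinarith
  have hSP0c : 0 ≤ SP := by
    rw [hSP]
    exact Finset.sum_nonneg fun i _ => mul_nonneg (hαpos i).le (hπSp0 i)
  have hM0 : 0 ≤ M := by
    rw [hM]; exact add_nonneg hπInv0 (mul_nonneg hcc0 hSP0c)
  set t : ℝ := 4 * M / R with ht
  have ht0 : 0 ≤ t := div_nonneg (by linarith) hR0.le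
  have hBchain : B ≤ ∑ s, cfgW q πInv πSp s * Real.exp (-t * cfgV α s) := by
    rw [hBdef]
    calc (∑ s ∈ badF, cfgW q πInv πSp s)
        ≤ ∑ s ∈ badF, cfgW q πInv πSp s * Real.exp (-t * cfgV α s) := by
          refine Finset.sum_le_sum fun s hs => ?_
          have hV : cfgV α s ≤ 0 := by
            have := Finset.mem_filter.1 (hbadF ▸ hs)
            exact this.2
          have hone : (1:ℝ) ≤ Real.exp (-t * cfgV α s) :=
            Real.one_le_exp (by nlinarith)
          nlinarith [hWnonneg s]
      _ ≤ ∑ s, cfgW q πInv πSp s * Real.exp (-t * cfgV α s) :=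
          Finset.sum_le_sum_of_subset_of_nonneg (Finset.subset_univ _)
            fun s _ _ => mul_nonneg (hWnonneg s) (Real.exp_pos _).le
  have he0 : πInv * Real.exp (-t) + (1 - πInv) ≤ Real.exp (-(t*πInv) + t^2/8) := by
    have h := hoeff_two πInv 0 (-1) t hπInv0 hπInv1
    rw [show t * (-1:ℝ) = -t by ring, mul_zero, Real.exp_zero, mul_one] at h
    rw [show t * (πInv * (-1:ℝ) + (1 - πInv) * 0) + t^2 * ((-1:ℝ) - 0)^2/8
        = -(t*πInv) + t^2/8 by ring] at h
    exact h
  have hterm_nonneg : ∀ i, 0 ≤ πSp i * (q * Real.exp (-(t * α i)) + (1 - q) * Real.exp (t * α i))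
      + (1 - πSp i) := fun i =>
    add_nonneg (mul_nonneg (hπSp0 i) (add_nonneg (mul_nonneg hq0 (Real.exp_pos _).le)
      (mul_nonneg (by linarith) (Real.exp_pos _).le))) (by linarith [hπSp1 i])
  have hei : ∀ i, πSp i * (q * Real.exp (-(t * α i)) + (1 - q) * Real.exp (t * α i)) + (1 - πSp i)
      ≤ Real.exp (-(t * (α i * πSp i * cc)) + t^2 * α i^2 / 2) := by
    intro i
    have h := hoeff_three (πSp i * q) (πSp i * (1 - q)) (1 - πSp i) (-(α i)) (α i) 0
        (-(α i)) (α i) t (mul_nonneg (hπSp0 i) hq0) (mul_nonneg (hπSp0 i) (by linarith))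
        (by linarith [hπSp1 i]) (by ring) (by linarith [hαpos i])
        le_rfl (by linarith [hαpos i]) (by linarith [hαpos i]) le_rfl
        (by linarith [hαpos i]) (by linarith [hαpos i])
    rw [mul_zero, Real.exp_zero, mul_one, show t * (-(α i)) = -(t * α i) by ring] at h
    rw [show t * ((πSp i * q) * (-(α i)) + (πSp i * (1-q)) * (α i) + (1 - πSp i) * 0)
        + t^2 * ((α i) - (-(α i)))^2/8
        = -(t * (α i * πSp i * (2*q-1))) + t^2 * α i^2/2 by ring] at h
    rw [hcc]
    calc πSp i * (q * Real.exp (-(t * α i)) + (1 - q) * Real.exp (t * α i)) + (1 - πSp i)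
        = πSp i * q * Real.exp (-(t * α i)) + πSp i * (1 - q) * Real.exp (t * α i)
          + (1 - πSp i) := by ring
      _ ≤ _ := h
  have hprod : (πInv * Real.exp (-t) + (1 - πInv)) *
      ∏ i, (πSp i * (q * Real.exp (-(t * α i)) + (1 - q) * Real.exp (t * α i)) + (1 - πSp i))
      ≤ Real.exp (-(t*M) + t^2*R/8) := by
    have h1 : ∏ i, (πSp i * (q * Real.exp (-(t * α i)) + (1 - q) * Real.exp (t * α i))
          + (1 - πSp i))
        ≤ ∏ i, Real.exp (-(t * (α i * πSp i * cc)) + t^2 * α i^2/2) :=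
      Finset.prod_le_prod (fun i _ => hterm_nonneg i) (fun i _ => hei i)
    have h2 := mul_le_mul he0 h1 (Finset.prod_nonneg fun i _ => hterm_nonneg i)
      (Real.exp_pos _).le
    refine h2.trans (le_of_eq ?_)
    rw [← Real.exp_sum, ← Real.exp_add]
    congr 1
    rw [Finset.sum_add_distrib]
    have e1 : ∑ i, -(t * (α i * πSp i * cc)) = -(t * cc * SP) := by
      rw [hSP, Finset.mul_sum, ← Finset.sum_neg_distrib]
      exact Finset.sum_congr rfl fun i _ => by ring
    have e2 : ∑ i, t^2 * α i^2 / 2 = t^2 * A2 / 2 := by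
      rw [hA2, Finset.mul_sum, Finset.sum_div]
    rw [e1, e2, hM, hR]
    ring
  have hexp_val : -(t*M) + t^2*R/8 = -2*M^2/R := by
    rw [ht]
    field_simp
    ring
  have hfinal : B ≤ Real.exp (-2*M^2/R) := by
    calc B ≤ ∑ s, cfgW q πInv πSp s * Real.exp (-t * cfgV α s) := hBchain
      _ = _ := cfg_factorize q πInv πSp α t
      _ ≤ Real.exp (-(t*M) + t^2*R/8) := hprod
      _ = Real.exp (-2*M^2/R) := by rw [hexp_val]
  have hgoal : -2 * (πInv + (2*p*(1-φ) - 1) * ∑ i, (wSp i / wInv) * πSp i) ^ 2 /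
      (4 * (∑ i, (wSp i / wInv) ^ 2) + 1) = -2*M^2/R := by
    rw [hM, hR, hSP, hA2, hcc, hq, hα]
    simp only []
    ring
  rw [hgoal]
  calc ℓ ≤ B := hlB
    _ ≤ Real.exp (-2*M^2/R) := hfinal
    _ ≤ 2 * Real.exp (-2*M^2/R) := by nlinarith [Real.exp_pos (-2*M^2/R)]
end

section
/- (Theorem 2, perfectly debiased training bound) If φ = 1 - 1/(2p), then the classification error under the mixture distribution satisfies ℓ ≤ 2·exp( -2·π_inv² / (4·Σ_{i=1}^D α_i² + 1) ), where α_i = w_{sp,i}/w_inv; i.e. the training bound coincides with the unbiased test bound. -/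
open Real Finset MeasureTheory

lemma aux_expm2 : (0.1353 : ℝ) ≤ Real.exp (-2) := by
  rw [Real.exp_neg]
  rw [show (2:ℝ) = 1 + 1 by norm_num, Real.exp_add]
  have h := Real.exp_one_lt_d9
  have h0 := Real.exp_pos 1
  rw [inv_eq_one_div, le_div_iff₀ (by positivity)]
  nlinarith

lemma aux_scalar' (P s : ℝ) (hP0 : 0 ≤ P) (hP1 : P ≤ 1) (hs0 : 0 ≤ s) (hs2 : s ≤ 2) :
    (1 - P)/2 + P * Real.exp (-s) ≤ 2 * Real.exp (-(P^2 * s)) := by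
  have hes1 : Real.exp (-s) ≤ 1 := by
    rw [show (1:ℝ) = Real.exp 0 by simp]; exact Real.exp_le_exp.mpr (by linarith)
  have hmono : Real.exp (-s) ≤ Real.exp (-(P^2*s)) := by
    apply Real.exp_le_exp.mpr
    nlinarith [mul_nonneg hs0 (sub_nonneg.mpr hP1), mul_nonneg (mul_nonneg hs0 hP0) (sub_nonneg.mpr hP1)]
  by_cases hc : (129/200 : ℝ) ≤ P
  · have h2 : Real.exp (-2) ≤ Real.exp (-s) := Real.exp_le_exp.mpr (by linarith)
    have h3 := aux_expm2
    nlinarith [Real.exp_pos (-s)]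
  · push_neg at hc
    have h1 : (1 - P)/2 + P * Real.exp (-s) ≤ (1 + P)/2 := by nlinarith
    have h2 : Real.exp (-(16641/20000 : ℝ)) ≤ Real.exp (-(P^2*s)) := by
      apply Real.exp_le_exp.mpr; nlinarith
    have h3 : ((143359:ℝ)/160000)^8 ≤ Real.exp (-(16641/20000 : ℝ)) := by
      have h4 : (-(16641/160000 : ℝ)) + 1 ≤ Real.exp (-(16641/160000 : ℝ)) :=
        Real.add_one_le_exp _
      have h5 : Real.exp (-(16641/20000 : ℝ)) = Real.exp (-(16641/160000 : ℝ)) ^ (8:ℕ) := by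
        rw [← Real.exp_nat_mul]; norm_num
      rw [h5]
      apply pow_le_pow_left₀ (by norm_num)
      linarith
    have h6 : (329/400 : ℝ) ≤ 2 * ((143359:ℝ)/160000)^8 := by norm_num
    linarith

lemma aux_scalar (P A : ℝ) (hP0 : 0 ≤ P) (hP1 : P ≤ 1) (hA : 0 < A) :
    (1 - P)/2 + P * Real.exp (-(1/(2*A))) ≤ 2 * Real.exp (-2*P^2/(4*A+1)) := by
  have hA1 : (0:ℝ) < 4*A+1 := by linarith
  have hs0 : (0:ℝ) ≤ 2/(4*A+1) := by positivity
  have hs2 : 2/(4*A+1) ≤ 2 := by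
    rw [div_le_iff₀ hA1]; nlinarith
  have h1 : Real.exp (-(1/(2*A))) ≤ Real.exp (-(2/(4*A+1))) := by
    apply Real.exp_le_exp.mpr
    have : 2/(4*A+1) ≤ 1/(2*A) := by
      rw [div_le_div_iff₀ hA1 (by linarith)]; nlinarith
    linarith
  have h2 := aux_scalar' P (2/(4*A+1)) hP0 hP1 hs0 hs2
  have h3 : -(P^2*(2/(4*A+1))) = -2*P^2/(4*A+1) := by ring
  rw [h3] at h2
  nlinarith [Real.exp_pos (-(2/(4*A+1)))]


def sgB (b : Bool) : ℝ := if b then 1 else -1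
def ioB (b : Bool) : ℝ := if b then 1 else 0

@[simp] lemma sgB_true : sgB true = 1 := rfl
@[simp] lemma sgB_false : sgB false = -1 := rfl
@[simp] lemma ioB_true : ioB true = 1 := rfl
@[simp] lemma ioB_false : ioB false = 0 := rfl
@[simp] lemma sgB_not (b : Bool) : sgB (!b) = - sgB b := by cases b <;> simp

def WcP {D : ℕ} (πSp : Fin D → ℝ) (c : Fin D → Bool) : ℝ :=
  ∏ i, (if c i then πSp i else 1 - πSp i)

def Tv {D : ℕ} (wSp : Fin D → ℝ) (c ξ : Fin D → Bool) : ℝ :=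
  ∑ i, wSp i * ioB (c i) * sgB (ξ i)

lemma WcP_nonneg {D : ℕ} (πSp : Fin D → ℝ) (hπSp0 : ∀ i, 0 ≤ πSp i)
    (hπSp1 : ∀ i, πSp i ≤ 1) (c : Fin D → Bool) : 0 ≤ WcP πSp c := by
  apply Finset.prod_nonneg
  intro i _
  split
  · exact hπSp0 i
  · linarith [hπSp1 i]

lemma WcP_sum {D : ℕ} (πSp : Fin D → ℝ) : ∑ c : Fin D → Bool, WcP πSp c = 1 := by
  unfold WcP
  rw [← Fintype.prod_sum (fun (i : Fin D) (b : Bool) => if b = true then πSp i else 1 - πSp i)]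
  rw [Finset.prod_eq_one]
  intro i _
  simp

lemma sum_half_WcP {D : ℕ} (πSp : Fin D → ℝ) : ∑ c : Fin D → Bool, ∑ _ξ : Fin D → Bool,
    ((1:ℝ)/2)^D * WcP πSp c = 1 := by
  have hcard : (Finset.univ : Finset (Fin D → Bool)).card = 2 ^ D := by
    simp [Finset.card_univ]
  calc ∑ c : Fin D → Bool, ∑ _ξ : Fin D → Bool, ((1:ℝ)/2)^D * WcP πSp c
      = ∑ c : Fin D → Bool, (2:ℝ)^D * (((1:ℝ)/2)^D * WcP πSp c) := by
        apply Finset.sum_congr rfl; intro c _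
        rw [Finset.sum_const, hcard, nsmul_eq_mul]; push_cast; ring
    _ = ∑ c : Fin D → Bool, WcP πSp c := by
        apply Finset.sum_congr rfl; intro c _
        rw [← mul_assoc, ← mul_pow]; norm_num
    _ = 1 := WcP_sum πSp

def negPerm {D : ℕ} : (Fin D → Bool) ≃ (Fin D → Bool) :=
  Function.Involutive.toPerm (fun ξ i => !(ξ i)) (by intro ξ; funext i; simp)

lemma Tv_neg {D : ℕ} (wSp : Fin D → ℝ) (c ξ : Fin D → Bool) :
    Tv wSp c (fun i => !(ξ i)) = - Tv wSp c ξ := by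
  unfold Tv
  rw [← Finset.sum_neg_distrib]
  exact Finset.sum_congr rfl fun i _ => by simp [mul_neg]

lemma comb_sym {D : ℕ} (πSp : Fin D → ℝ) (hπSp0 : ∀ i, 0 ≤ πSp i)
    (hπSp1 : ∀ i, πSp i ≤ 1) (wSp : Fin D → ℝ) :
    ∑ c : Fin D → Bool, ∑ ξ : Fin D → Bool,
    (if Tv wSp c ξ < 0 then ((1:ℝ)/2)^D * WcP πSp c else 0) ≤ 1/2 := by
  have hw := WcP_nonneg πSp hπSp0 hπSp1
  have hsym : ∑ c : Fin D → Bool, ∑ ξ : Fin D → Bool,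
      (if 0 < Tv wSp c ξ then ((1:ℝ)/2)^D * WcP πSp c else 0)
    = ∑ c : Fin D → Bool, ∑ ξ : Fin D → Bool,
      (if Tv wSp c ξ < 0 then ((1:ℝ)/2)^D * WcP πSp c else 0) := by
    apply Finset.sum_congr rfl
    intro c _
    apply Fintype.sum_equiv (negPerm)
    intro ξ
    have hn : Tv wSp c (negPerm ξ) = - Tv wSp c ξ := Tv_neg wSp c ξ
    rw [hn]
    by_cases h : 0 < Tv wSp c ξ
    · rw [if_pos h, if_pos (by linarith)]
    · rw [if_neg h, if_neg (by intro hh; apply h; linarith)]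
  have key : ∀ c ξ : Fin D → Bool,
      (if Tv wSp c ξ < 0 then ((1:ℝ)/2)^D * WcP πSp c else 0)
      + (if 0 < Tv wSp c ξ then ((1:ℝ)/2)^D * WcP πSp c else 0)
      ≤ ((1:ℝ)/2)^D * WcP πSp c := by
    intro c ξ
    have h0 : (0:ℝ) ≤ ((1:ℝ)/2)^D * WcP πSp c := mul_nonneg (by positivity) (hw c)
    rcases lt_trichotomy (Tv wSp c ξ) 0 with h | h | h
    · rw [if_pos h, if_neg (by linarith)]; linarith
    · rw [if_neg (by simp [h]), if_neg (by simp [h])]; linarith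
    · rw [if_neg (by linarith), if_pos h]; linarith
  have hsum : (∑ c : Fin D → Bool, ∑ ξ : Fin D → Bool,
      (if Tv wSp c ξ < 0 then ((1:ℝ)/2)^D * WcP πSp c else 0))
      + (∑ c : Fin D → Bool, ∑ ξ : Fin D → Bool,
      (if 0 < Tv wSp c ξ then ((1:ℝ)/2)^D * WcP πSp c else 0)) ≤ 1 := by
    calc (∑ c : Fin D → Bool, ∑ ξ : Fin D → Bool,
        (if Tv wSp c ξ < 0 then ((1:ℝ)/2)^D * WcP πSp c else 0))
        + (∑ c : Fin D → Bool, ∑ ξ : Fin D → Bool,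
        (if 0 < Tv wSp c ξ then ((1:ℝ)/2)^D * WcP πSp c else 0))
        = ∑ c : Fin D → Bool, ∑ ξ : Fin D → Bool,
          ((if Tv wSp c ξ < 0 then ((1:ℝ)/2)^D * WcP πSp c else 0)
          + (if 0 < Tv wSp c ξ then ((1:ℝ)/2)^D * WcP πSp c else 0)) := by
          rw [← Finset.sum_add_distrib]
          exact Finset.sum_congr rfl fun c _ => (Finset.sum_add_distrib).symm
      _ ≤ ∑ c : Fin D → Bool, ∑ _ξ : Fin D → Bool, ((1:ℝ)/2)^D * WcP πSp c :=
          Finset.sum_le_sum fun c _ => Finset.sum_le_sum fun ξ _ => key c ξ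
      _ = 1 := sum_half_WcP πSp
  linarith [hsym ▸ hsum]
lemma comb_chern {D : ℕ} (hD : 0 < D) (πSp : Fin D → ℝ) (hπSp0 : ∀ i, 0 ≤ πSp i)
    (hπSp1 : ∀ i, πSp i ≤ 1) (wInv : ℝ) (hwInv : 0 < wInv)
    (wSp : Fin D → ℝ) (hwSp : ∀ i, 0 < wSp i) :
    ∑ c : Fin D → Bool, ∑ ξ : Fin D → Bool,
      (if wInv + Tv wSp c ξ < 0 then ((1:ℝ)/2)^D * WcP πSp c else 0)
    ≤ Real.exp (-(1/(2 * ∑ i, (wSp i / wInv)^2))) := by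
  have hW2 : (0:ℝ) < ∑ i, wSp i ^ 2 := by
    have : Nonempty (Fin D) := Fin.pos_iff_nonempty.mp hD
    exact Finset.sum_pos (fun i _ => pow_pos (hwSp i) 2) Finset.univ_nonempty
  set W2 := ∑ i, wSp i ^ 2 with hW2def
  set t := wInv / W2 with htdef
  have ht : 0 < t := by positivity
  have hw := WcP_nonneg πSp hπSp0 hπSp1
  -- Step 1: Chernoff pointwise
  have step1 : ∀ c ξ : Fin D → Bool,
      (if wInv + Tv wSp c ξ < 0 then ((1:ℝ)/2)^D * WcP πSp c else 0)
      ≤ ((1:ℝ)/2)^D * WcP πSp c * Real.exp (-(t * (wInv + Tv wSp c ξ))) := by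
    intro c ξ
    have h0 : (0:ℝ) ≤ ((1:ℝ)/2)^D * WcP πSp c := mul_nonneg (by positivity) (hw c)
    split
    · next h =>
      have : (1:ℝ) ≤ Real.exp (-(t * (wInv + Tv wSp c ξ))) := by
        rw [show (1:ℝ) = Real.exp 0 by simp]
        apply Real.exp_le_exp.mpr
        nlinarith
      nlinarith [this]
    · positivity
  -- the factorized function
  let h : Fin D → Bool → Bool → ℝ := fun i a b =>
    (1/2) * (if a then πSp i else 1 - πSp i) * Real.exp (-(t * (wSp i * ioB a * sgB b)))
  have hdef : ∀ i a b, h i a b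
      = (1/2) * (if a then πSp i else 1 - πSp i) * Real.exp (-(t * (wSp i * ioB a * sgB b))) :=
    fun i a b => rfl
  have step2 : ∀ c ξ : Fin D → Bool,
      ((1:ℝ)/2)^D * WcP πSp c * Real.exp (-(t * (wInv + Tv wSp c ξ)))
      = Real.exp (-(t * wInv)) * ∏ i, h i (c i) (ξ i) := by
    intro c ξ
    have e1 : Real.exp (-(t * (wInv + Tv wSp c ξ)))
        = Real.exp (-(t*wInv)) * Real.exp (-(t * Tv wSp c ξ)) := by
      rw [← Real.exp_add]; ring_nf
    have e2 : Real.exp (-(t * Tv wSp c ξ))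
        = ∏ i, Real.exp (-(t * (wSp i * ioB (c i) * sgB (ξ i)))) := by
      rw [← Real.exp_sum]
      congr 1
      unfold Tv
      rw [Finset.mul_sum, ← Finset.sum_neg_distrib]
    have e3 : ((1:ℝ)/2)^D = ∏ _i : Fin D, ((1:ℝ)/2) := by
      rw [Finset.prod_const, Finset.card_univ, Fintype.card_fin]
    have e7 : ((1:ℝ)/2)^D * WcP πSp c * Real.exp (-(t * Tv wSp c ξ))
        = ∏ i, h i (c i) (ξ i) := by
      rw [e2, e3]
      unfold WcP
      rw [← Finset.prod_mul_distrib, ← Finset.prod_mul_distrib]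
    calc ((1:ℝ)/2)^D * WcP πSp c * Real.exp (-(t * (wInv + Tv wSp c ξ)))
        = Real.exp (-(t*wInv)) * (((1:ℝ)/2)^D * WcP πSp c * Real.exp (-(t * Tv wSp c ξ))) := by
          rw [e1]; ring
      _ = Real.exp (-(t*wInv)) * ∏ i, h i (c i) (ξ i) := by rw [e7]
  have step3 : ∑ c : Fin D → Bool, ∑ ξ : Fin D → Bool, (∏ i, h i (c i) (ξ i))
      = ∏ i, ((1 - πSp i) + πSp i * Real.cosh (t * wSp i)) := by
    have e4 : ∀ c : Fin D → Bool, ∑ ξ : Fin D → Bool, (∏ i, h i (c i) (ξ i))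
        = ∏ i, (∑ b : Bool, h i (c i) b) :=
      fun c => (Fintype.prod_sum (fun i b => h i (c i) b)).symm
    have e5 : ∑ c : Fin D → Bool, ∏ i, (∑ b : Bool, h i (c i) b)
        = ∏ i, (∑ a : Bool, ∑ b : Bool, h i a b) :=
      (Fintype.prod_sum (fun i a => ∑ b : Bool, h i a b)).symm
    rw [Finset.sum_congr rfl (fun c _ => e4 c), e5]
    apply Finset.prod_congr rfl
    intro i _
    rw [Fintype.sum_bool]
    rw [Fintype.sum_bool, Fintype.sum_bool]
    rw [hdef, hdef, hdef, hdef]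
    simp only [ioB_true, ioB_false, sgB_true, sgB_false, if_true, if_false,
      Bool.false_eq_true, mul_one, mul_zero, zero_mul, neg_zero, Real.exp_zero, mul_neg_one,
      neg_neg]
    rw [Real.cosh_eq]
    ring
  have step4 : ∏ i, ((1 - πSp i) + πSp i * Real.cosh (t * wSp i))
      ≤ ∏ i, Real.exp ((t * wSp i)^2/2) := by
    apply Finset.prod_le_prod
    · intro i _
      have := Real.one_le_cosh (t * wSp i)
      nlinarith [hπSp0 i, hπSp1 i]
    · intro i _
      have h1 : (1 - πSp i) + πSp i * Real.cosh (t * wSp i) ≤ Real.cosh (t * wSp i) := by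
        nlinarith [Real.one_le_cosh (t * wSp i), hπSp0 i, hπSp1 i]
      refine h1.trans ?_
      simpa using Real.cosh_le_exp_half_sq (t * wSp i)
  have step5 : Real.exp (-(t*wInv)) * ∏ i, Real.exp ((t * wSp i)^2/2)
      = Real.exp (-(1/(2 * ∑ i, (wSp i / wInv)^2))) := by
    rw [← Real.exp_sum, ← Real.exp_add]
    congr 1
    have hA : ∑ i, (wSp i/wInv)^2 = W2 / wInv^2 := by
      rw [hW2def, Finset.sum_div]
      exact Finset.sum_congr rfl fun i _ => by rw [div_pow]
    have hsum : ∑ i, (t * wSp i)^2/2 = t^2 * W2 / 2 := by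
      rw [hW2def, Finset.mul_sum, Finset.sum_div]
      exact Finset.sum_congr rfl fun i _ => by rw [mul_pow]
    rw [hA, hsum, htdef]
    field_simp
    ring
  calc ∑ c : Fin D → Bool, ∑ ξ : Fin D → Bool,
      (if wInv + Tv wSp c ξ < 0 then ((1:ℝ)/2)^D * WcP πSp c else 0)
      ≤ ∑ c : Fin D → Bool, ∑ ξ : Fin D → Bool,
        ((1:ℝ)/2)^D * WcP πSp c * Real.exp (-(t * (wInv + Tv wSp c ξ))) :=
        Finset.sum_le_sum fun c _ => Finset.sum_le_sum fun ξ _ => step1 c ξ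
    _ = ∑ c : Fin D → Bool, ∑ ξ : Fin D → Bool,
        Real.exp (-(t * wInv)) * ∏ i, h i (c i) (ξ i) := by
        exact Finset.sum_congr rfl fun c _ => Finset.sum_congr rfl fun ξ _ => step2 c ξ
    _ = Real.exp (-(t * wInv)) * ∑ c : Fin D → Bool, ∑ ξ : Fin D → Bool,
        (∏ i, h i (c i) (ξ i)) := by
        rw [Finset.mul_sum]
        exact Finset.sum_congr rfl fun c _ => (Finset.mul_sum _ _ _).symm
    _ = Real.exp (-(t * wInv)) * ∏ i, ((1 - πSp i) + πSp i * Real.cosh (t * wSp i)) := by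
        rw [step3]
    _ ≤ Real.exp (-(t * wInv)) * ∏ i, Real.exp ((t * wSp i)^2/2) := by
        apply mul_le_mul_of_nonneg_left step4 (le_of_lt (Real.exp_pos _))
    _ = Real.exp (-(1/(2 * ∑ i, (wSp i / wInv)^2))) := step5

lemma comb_main {D : ℕ} (hD : 0 < D) (P : ℝ) (hP0 : 0 ≤ P) (hP1 : P ≤ 1)
    (πSp : Fin D → ℝ) (hπSp0 : ∀ i, 0 ≤ πSp i) (hπSp1 : ∀ i, πSp i ≤ 1)
    (wInv : ℝ) (hwInv : 0 < wInv) (wSp : Fin D → ℝ) (hwSp : ∀ i, 0 < wSp i) :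
    ∑ a : Bool, ∑ c : Fin D → Bool, ∑ ξ : Fin D → Bool,
      (if wInv * ioB a + Tv wSp c ξ < 0 then
        ((1:ℝ)/2)^D * (if a then P else 1 - P) * WcP πSp c else 0)
    ≤ (1 - P)/2 + P * Real.exp (-(1/(2 * ∑ i, (wSp i / wInv)^2))) := by
  rw [Fintype.sum_bool]
  have htrue : (∑ c : Fin D → Bool, ∑ ξ : Fin D → Bool,
      (if wInv * ioB true + Tv wSp c ξ < 0 then
        ((1:ℝ)/2)^D * (if true then P else 1 - P) * WcP πSp c else 0))
      = P * ∑ c : Fin D → Bool, ∑ ξ : Fin D → Bool,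
        (if wInv + Tv wSp c ξ < 0 then ((1:ℝ)/2)^D * WcP πSp c else 0) := by
    rw [Finset.mul_sum]
    apply Finset.sum_congr rfl; intro c _
    rw [Finset.mul_sum]
    apply Finset.sum_congr rfl; intro ξ _
    simp only [ioB_true, mul_one, if_true]
    split_ifs <;> ring
  have hfalse : (∑ c : Fin D → Bool, ∑ ξ : Fin D → Bool,
      (if wInv * ioB false + Tv wSp c ξ < 0 then
        ((1:ℝ)/2)^D * (if false then P else 1 - P) * WcP πSp c else 0))
      = (1 - P) * ∑ c : Fin D → Bool, ∑ ξ : Fin D → Bool,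
        (if Tv wSp c ξ < 0 then ((1:ℝ)/2)^D * WcP πSp c else 0) := by
    rw [Finset.mul_sum]
    apply Finset.sum_congr rfl; intro c _
    rw [Finset.mul_sum]
    apply Finset.sum_congr rfl; intro ξ _
    simp only [ioB_false, mul_zero, zero_add, Bool.false_eq_true, if_false]
    split_ifs <;> ring
  rw [htrue, hfalse]
  have h1 := comb_chern hD πSp hπSp0 hπSp1 wInv hwInv wSp hwSp
  have h2 := comb_sym πSp hπSp0 hπSp1 wSp
  have hP1' : 0 ≤ 1 - P := by linarith
  have := mul_le_mul_of_nonneg_left h1 hP0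
  have := mul_le_mul_of_nonneg_left h2 hP1'
  linarith

abbrev Cfg (D : ℕ) := Bool × (Fin D → Bool) × Bool × (Fin D → Bool)

def EvS {Ω : Type*} {D : ℕ} (Y : Ω → ℝ) (Z : Fin D → Ω → ℝ) (mInv : Ω → ℝ)
    (mSp : Fin D → Ω → ℝ) (σ : Cfg D) : Set Ω :=
  {ω | Y ω = sgB σ.1 ∧ (∀ i, Z i ω = sgB (σ.2.1 i)) ∧ mInv ω = ioB σ.2.2.1 ∧
       (∀ i, mSp i ω = ioB (σ.2.2.2 i))}

def ovalF {D : ℕ} (wInv : ℝ) (wSp : Fin D → ℝ) (σ : Cfg D) : ℝ :=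
  wInv * ioB σ.2.2.1 * sgB σ.1 + ∑ i, wSp i * ioB (σ.2.2.2 i) * sgB (σ.2.1 i)

lemma sgB_inj {b b' : Bool} (h : sgB b = sgB b') : b = b' := by
  cases b <;> cases b' <;> simp_all [sgB] <;> norm_num at h
lemma ioB_inj {b b' : Bool} (h : ioB b = ioB b') : b = b' := by
  cases b <;> cases b' <;> simp_all [ioB] <;> norm_num at h
lemma sgB_sq (b : Bool) : sgB b * sgB b = 1 := by cases b <;> norm_num [sgB]
lemma sgB_abs (b : Bool) : sgB b = 1 ∨ sgB b = -1 := by cases b <;> simp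

lemma sign_mem (x : ℝ) : -1 ≤ Real.sign x ∧ Real.sign x ≤ 1 := by
  rcases lt_trichotomy x 0 with h | h | h
  · rw [Real.sign_of_neg h]; norm_num
  · rw [h, Real.sign_zero]; norm_num
  · rw [Real.sign_of_pos h]; norm_num

section main
variable {Ω : Type*} [MeasurableSpace Ω] (μ : MeasureTheory.Measure Ω)
  [MeasureTheory.IsProbabilityMeasure μ]
  {D : ℕ} (Y : Ω → ℝ) (Z : Fin D → Ω → ℝ) (mInv : Ω → ℝ) (mSp : Fin D → Ω → ℝ)

lemma EvS_meas (hY : Measurable Y) (hZ : ∀ i, Measurable (Z i))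
    (hmInv : Measurable mInv) (hmSp : ∀ i, Measurable (mSp i)) (σ : Cfg D) :
    MeasurableSet (EvS Y Z mInv mSp σ) := by
  have : EvS Y Z mInv mSp σ = (Y ⁻¹' {sgB σ.1}) ∩ ((⋂ i, Z i ⁻¹' {sgB (σ.2.1 i)}) ∩
      ((mInv ⁻¹' {ioB σ.2.2.1}) ∩ (⋂ i, mSp i ⁻¹' {ioB (σ.2.2.2 i)}))) := by
    ext ω; simp only [EvS, Set.mem_setOf_eq, Set.mem_inter_iff, Set.mem_iInter,
      Set.mem_preimage, Set.mem_singleton_iff]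
  rw [this]
  exact (hY (measurableSet_singleton _)).inter
    ((MeasurableSet.iInter (fun i => hZ i (measurableSet_singleton _))).inter
      ((hmInv (measurableSet_singleton _)).inter
        (MeasurableSet.iInter (fun i => hmSp i (measurableSet_singleton _)))))

lemma EvS_disj : Pairwise (Function.onFun Disjoint (EvS Y Z mInv mSp)) := by
  intro σ σ' hne
  rw [Function.onFun, Set.disjoint_left]
  intro ω h1 h2
  obtain ⟨hY1, hZ1, hm1, hs1⟩ := h1
  obtain ⟨hY2, hZ2, hm2, hs2⟩ := h2
  apply hne
  obtain ⟨y, ε, a, c⟩ := σ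
  obtain ⟨y', ε', a', c'⟩ := σ'
  simp only at *
  have : y = y' := sgB_inj (hY1 ▸ hY2 ▸ rfl)
  have : ε = ε' := funext fun i => sgB_inj ((hZ1 i) ▸ (hZ2 i) ▸ rfl)
  have : a = a' := ioB_inj (hm1 ▸ hm2 ▸ rfl)
  have : c = c' := funext fun i => ioB_inj ((hs1 i) ▸ (hs2 i) ▸ rfl)
  subst_vars
  rfl

lemma O_on_EvS (wInv : ℝ) (wSp : Fin D → ℝ) (O : Ω → ℝ)
    (hO : ∀ ω, O ω = wInv * mInv ω * Y ω + ∑ i, wSp i * mSp i ω * Z i ω)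
    (σ : Cfg D) (ω : Ω) (hω : ω ∈ EvS Y Z mInv mSp σ) :
    O ω = ovalF wInv wSp σ := by
  obtain ⟨h1, h2, h3, h4⟩ := hω
  rw [hO, h1, h3, ovalF]
  congr 1
  exact Finset.sum_congr rfl fun i _ => by rw [h2 i, h4 i]
end main


-- extra aux lemmas used by the main proof
lemma yval_oval {D : ℕ} (wInv : ℝ) (wSp : Fin D → ℝ) (y a : Bool) (ε c : Fin D → Bool) :
    sgB y * ovalF wInv wSp (y, ε, a, c)
    = wInv * ioB a + Tv wSp c (fun i => ε i == y) := by
  unfold ovalF Tv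
  simp only
  rw [mul_add, Finset.mul_sum]
  congr 1
  · have h2 := sgB_sq y
    linear_combination (wInv * ioB a) * h2
  · apply Finset.sum_congr rfl
    intro i _
    cases hy : y <;> cases he : ε i <;> simp [sgB] <;> ring

def eYPerm {D : ℕ} (y : Bool) : (Fin D → Bool) ≃ (Fin D → Bool) :=
  Function.Involutive.toPerm (fun ε i => ε i == y)
    (by intro ε; funext i; cases y <;> simp)

lemma eYPerm_apply {D : ℕ} (y : Bool) (ε : Fin D → Bool) :
    eYPerm y ε = fun i => ε i == y := rfl

lemma sum3_comm {α β γ M : Type*} [Fintype α] [Fintype β] [Fintype γ] [AddCommMonoid M]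
    (f : α → β → γ → M) :
    ∑ x : α, ∑ y : β, ∑ z : γ, f x y z = ∑ y : β, ∑ z : γ, ∑ x : α, f x y z := by
  rw [Finset.sum_comm]
  exact Finset.sum_congr rfl fun y _ => Finset.sum_comm

set_option maxHeartbeats 1000000 in
/-- **Theorem 2, perfectly debiased training bound.** -/
theorem stmt_8
    {Ω : Type*} [MeasurableSpace Ω] (μ : MeasureTheory.Measure Ω)
    [MeasureTheory.IsProbabilityMeasure μ]
    (D : ℕ) (hD : 0 < D) (p : ℝ) (hp : 1 / 2 < p) (hp1 : p ≤ 1)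
    (φ : ℝ) (hφ0 : 0 ≤ φ) (hφ1 : φ ≤ 1)
    (πInv : ℝ) (πSp : Fin D → ℝ)
    (hπInv0 : 0 ≤ πInv) (hπInv1 : πInv ≤ 1)
    (hπSp0 : ∀ i, 0 ≤ πSp i) (hπSp1 : ∀ i, πSp i ≤ 1)
    (Y : Ω → ℝ) (Z : Fin D → Ω → ℝ) (mInv : Ω → ℝ) (mSp : Fin D → Ω → ℝ)
    (hY : Measurable Y) (hZ : ∀ i, Measurable (Z i))
    (hmInv : Measurable mInv) (hmSp : ∀ i, Measurable (mSp i))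
    -- joint law: `Y` uniform on `{-1,1}`; given `Y`, `Z i` i.i.d. with the mixture law;
    -- masks Bernoulli, mutually independent and independent of `(Y, Z)`.
    (hlaw : ∀ (y : Bool) (ε : Fin D → Bool) (a : Bool) (c : Fin D → Bool),
      μ {ω | Y ω = (if y then (1 : ℝ) else -1) ∧
             (∀ i, Z i ω = (if ε i then (1 : ℝ) else -1)) ∧
             mInv ω = (if a then (1 : ℝ) else 0) ∧
             (∀ i, mSp i ω = (if c i then (1 : ℝ) else 0))} =
        ENNReal.ofReal ((1 / 2) *
          (∏ i, (if ε i = y then (1 - φ) * p else φ + (1 - φ) * (1 - p))) *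
          (if a then πInv else 1 - πInv) *
          (∏ i, (if c i then πSp i else 1 - πSp i))))
    (wInv : ℝ) (hwInv : 0 < wInv) (wSp : Fin D → ℝ) (hwSp : ∀ i, 0 < wSp i)
    (O : Ω → ℝ)
    (hO : ∀ ω, O ω = wInv * mInv ω * Y ω + ∑ i, wSp i * mSp i ω * Z i ω)
    (ℓ : ℝ)
    (hℓ : ℓ = (1 / 2) * ∫ ω, (1 - Y ω * Real.sign (O ω)) ∂μ)
    (hO0 : μ {ω | O ω = 0} = 0)
    (hφeq : φ = 1 - 1 / (2 * p)) :
    ℓ ≤ 2 * Real.exp (-2 * πInv ^ 2 / (4 * (∑ i, (wSp i / wInv) ^ 2) + 1)) := by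
  classical
  have hp0 : 0 < p := by linarith
  have hmixfac : ∀ (y : Bool) (ε : Fin D → Bool),
      (∏ i, (if ε i = y then (1 - φ) * p else φ + (1 - φ) * (1 - p))) = ((1:ℝ)/2)^D := by
    intro y ε
    calc (∏ i, (if ε i = y then (1 - φ) * p else φ + (1 - φ) * (1 - p)))
        = ∏ _i : Fin D, ((1:ℝ)/2) := by
          apply Finset.prod_congr rfl
          intro i _
          split
          · rw [hφeq]; field_simp; try ring
          · rw [hφeq]; field_simp; try ring
      _ = ((1:ℝ)/2)^D := by rw [Finset.prod_const, Finset.card_univ, Fintype.card_fin]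
  set E : Cfg D → Set Ω := fun σ => EvS Y Z mInv mSp σ with hE
  set q : Cfg D → ℝ := fun σ =>
    (1/2) * ((1:ℝ)/2)^D * (if σ.2.2.1 then πInv else 1 - πInv) * WcP πSp σ.2.2.2 with hqdef
  have hq0 : ∀ σ, 0 ≤ q σ := by
    intro σ
    apply mul_nonneg (mul_nonneg (mul_nonneg (by norm_num) (by positivity)) _)
      (WcP_nonneg πSp hπSp0 hπSp1 _)
    split
    · exact hπInv0
    · linarith
  have hq : ∀ σ, μ (E σ) = ENNReal.ofReal (q σ) := by
    rintro ⟨y, ε, a, c⟩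
    have h : μ (E (y, ε, a, c)) = ENNReal.ofReal ((1 / 2) *
        (∏ i, (if ε i = y then (1 - φ) * p else φ + (1 - φ) * (1 - p))) *
        (if a then πInv else 1 - πInv) *
        (∏ i, (if c i then πSp i else 1 - πSp i))) := hlaw y ε a c
    rw [h, hmixfac y ε]
    rfl
  have hmeas : ∀ σ, MeasurableSet (E σ) := fun σ => EvS_meas Y Z mInv mSp hY hZ hmInv hmSp σ
  have hdisj : Pairwise (Function.onFun Disjoint E) := EvS_disj Y Z mInv mSp
  have hqsum : ∑ σ : Cfg D, q σ = 1 := by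
    simp only [hqdef, Fintype.sum_prod_type]
    have h1 : ∀ (y : Bool) (ε : Fin D → Bool) (a : Bool),
        ∑ c : Fin D → Bool, (1/2) * ((1:ℝ)/2)^D * (if a then πInv else 1 - πInv) * WcP πSp c
        = (1/2) * ((1:ℝ)/2)^D * (if a then πInv else 1 - πInv) := by
      intro y ε a
      rw [← Finset.mul_sum, WcP_sum, mul_one]
    calc ∑ y : Bool, ∑ ε : Fin D → Bool, ∑ a : Bool, ∑ c : Fin D → Bool,
          (1/2) * ((1:ℝ)/2)^D * (if a then πInv else 1 - πInv) * WcP πSp c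
        = ∑ _y : Bool, ∑ _ε : Fin D → Bool, ((1:ℝ)/2) * ((1:ℝ)/2)^D := by
          apply Finset.sum_congr rfl; intro y _
          apply Finset.sum_congr rfl; intro ε _
          rw [Fintype.sum_bool, h1 y ε true, h1 y ε false]
          simp only [if_true, Bool.false_eq_true, if_false]
          ring
      _ = ∑ _y : Bool, (2:ℝ)^D * (((1:ℝ)/2) * ((1:ℝ)/2)^D) := by
          apply Finset.sum_congr rfl; intro y _
          rw [Finset.sum_const, Finset.card_univ]
          simp only [Fintype.card_fun, Fintype.card_bool, Fintype.card_fin, nsmul_eq_mul]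
          push_cast; ring
      _ = 1 := by
          rw [Fintype.sum_bool]
          have : (2:ℝ)^D * ((1:ℝ)/2)^D = 1 := by rw [← mul_pow]; norm_num
          nlinarith [this]
  have hU : μ (⋃ σ : Cfg D, E σ) = 1 := by
    rw [measure_iUnion hdisj hmeas, tsum_fintype]
    calc ∑ σ : Cfg D, μ (E σ) = ∑ σ : Cfg D, ENNReal.ofReal (q σ) :=
          Finset.sum_congr rfl fun σ _ => hq σ
      _ = ENNReal.ofReal (∑ σ : Cfg D, q σ) :=
          (ENNReal.ofReal_sum_of_nonneg (fun σ _ => hq0 σ)).symm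
      _ = 1 := by rw [hqsum]; simp
  have hUc : μ (⋃ σ : Cfg D, E σ)ᶜ = 0 := by
    have h := measure_compl (MeasurableSet.iUnion hmeas) (measure_ne_top μ _)
    rw [hU] at h
    simpa using h
  have hae : ∀ᵐ ω ∂μ, ω ∈ ⋃ σ : Cfg D, E σ := by
    rw [MeasureTheory.ae_iff]
    have heq : {ω | ¬ ω ∈ ⋃ σ : Cfg D, E σ} = (⋃ σ : Cfg D, E σ)ᶜ := rfl
    rw [heq]
    exact hUc
  set bad : Finset (Cfg D) := Finset.univ.filter (fun σ => sgB σ.1 * ovalF wInv wSp σ ≤ 0)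
    with hbad
  set B : Set Ω := ⋃ σ ∈ bad, E σ with hBdef
  have hBmeas : MeasurableSet B :=
    MeasurableSet.biUnion bad.countable_toSet (fun σ _ => hmeas σ)
  set g : Ω → ℝ := B.indicator (fun _ => 2) with hg
  have hgint : Integrable g μ := (integrable_const 2).indicator hBmeas
  have hg0 : ∀ ω, 0 ≤ g ω := fun ω => Set.indicator_nonneg (fun _ _ => by norm_num) ω
  have hpt : ∀ ω ∈ ⋃ σ : Cfg D, E σ,
      (0 ≤ 1 - Y ω * Real.sign (O ω) ∧ 1 - Y ω * Real.sign (O ω) ≤ g ω) := by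
    intro ω hω
    rw [Set.mem_iUnion] at hω
    obtain ⟨σ, hσ⟩ := hω
    have hYω : Y ω = sgB σ.1 := hσ.1
    have hOω : O ω = ovalF wInv wSp σ := O_on_EvS Y Z mInv mSp wInv wSp O hO σ ω hσ
    have hs := sign_mem (O ω)
    constructor
    · rcases sgB_abs σ.1 with h | h <;> rw [hYω, h] <;> nlinarith [hs.1, hs.2]
    · by_cases hb : sgB σ.1 * ovalF wInv wSp σ ≤ 0
      · have hωB : ω ∈ B := by
          rw [hBdef]
          exact Set.mem_biUnion (Finset.mem_filter.mpr ⟨Finset.mem_univ _, hb⟩) hσ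
        have hg2 : g ω = 2 := by rw [hg, Set.indicator_of_mem hωB]
        rw [hg2]
        rcases sgB_abs σ.1 with h | h <;> rw [hYω, h] <;> nlinarith [hs.1, hs.2]
      · push_neg at hb
        have h1 : Y ω * Real.sign (O ω) = 1 := by
          rcases sgB_abs σ.1 with h | h
          · have hpos : 0 < ovalF wInv wSp σ := by nlinarith
            rw [hYω, h, hOω, Real.sign_of_pos hpos]; norm_num
          · have hneg : ovalF wInv wSp σ < 0 := by nlinarith
            rw [hYω, h, hOω, Real.sign_of_neg hneg]; norm_num
        rw [h1]
        simpa using hg0 ω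
  have h0f : 0 ≤ᵐ[μ] fun ω => 1 - Y ω * Real.sign (O ω) :=
    hae.mono (fun ω hω => (hpt ω hω).1)
  have hfg : (fun ω => 1 - Y ω * Real.sign (O ω)) ≤ᵐ[μ] g :=
    hae.mono (fun ω hω => (hpt ω hω).2)
  have hint : ∫ ω, (1 - Y ω * Real.sign (O ω)) ∂μ ≤ ∫ ω, g ω ∂μ :=
    integral_mono_of_nonneg h0f hgint hfg
  have hgid : ∫ ω, g ω ∂μ = (μ B).toReal * 2 := by
    rw [hg, integral_indicator_const _ hBmeas]
    simp [smul_eq_mul]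
    rfl
  have hBle : (μ B).toReal ≤ ∑ σ ∈ bad, q σ := by
    have h1 : μ B ≤ ∑ σ ∈ bad, μ (E σ) := measure_biUnion_finset_le _ _
    have h2 : ∑ σ ∈ bad, μ (E σ) = ENNReal.ofReal (∑ σ ∈ bad, q σ) := by
      rw [Finset.sum_congr rfl (fun σ _ => hq σ),
        ENNReal.ofReal_sum_of_nonneg (fun σ _ => hq0 σ)]
    exact ENNReal.toReal_le_of_le_ofReal (Finset.sum_nonneg fun σ _ => hq0 σ) (h2 ▸ h1)
  have hl1 : ℓ ≤ ∑ σ ∈ bad, q σ := by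
    rw [hℓ]
    rw [hgid] at hint
    linarith
  have hzero : ∀ σ : Cfg D, sgB σ.1 * ovalF wInv wSp σ = 0 → q σ = 0 := by
    intro σ h
    have hov : ovalF wInv wSp σ = 0 := by
      rcases sgB_abs σ.1 with hh | hh <;> rw [hh] at h <;> linarith
    have hsub : E σ ⊆ {ω | O ω = 0} := fun ω hω => by
      simp only [Set.mem_setOf_eq]
      rw [O_on_EvS Y Z mInv mSp wInv wSp O hO σ ω hω, hov]
    have hz : μ (E σ) = 0 := measure_mono_null hsub hO0
    rw [hq σ] at hz
    have := ENNReal.ofReal_eq_zero.mp hz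
    linarith [hq0 σ]
  have hl2 : ∑ σ ∈ bad, q σ
      ≤ ∑ σ : Cfg D, (if sgB σ.1 * ovalF wInv wSp σ < 0 then q σ else 0) := by
    rw [hbad, Finset.sum_filter]
    apply Finset.sum_le_sum
    intro σ _
    rcases lt_trichotomy (sgB σ.1 * ovalF wInv wSp σ) 0 with h | h | h
    · rw [if_pos (le_of_lt h), if_pos h]
    · rw [if_pos (le_of_eq h), if_neg (by simp [h]), hzero σ h]
    · rw [if_neg (by linarith), if_neg (by linarith)]
  have hl3 : ∑ σ : Cfg D, (if sgB σ.1 * ovalF wInv wSp σ < 0 then q σ else 0)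
      = ∑ a : Bool, ∑ c : Fin D → Bool, ∑ ξ : Fin D → Bool,
        (if wInv * ioB a + Tv wSp c ξ < 0 then
          ((1:ℝ)/2)^D * (if a then πInv else 1 - πInv) * WcP πSp c else 0) := by
    simp only [Fintype.sum_prod_type]
    have hyre : ∀ y : Bool,
        (∑ ε : Fin D → Bool, ∑ a : Bool, ∑ c : Fin D → Bool,
          (if sgB y * ovalF wInv wSp (y, ε, a, c) < 0 then q (y, ε, a, c) else 0))
        = ∑ ξ : Fin D → Bool, ∑ a : Bool, ∑ c : Fin D → Bool,
          (if wInv * ioB a + Tv wSp c ξ < 0 then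
            (1/2) * (((1:ℝ)/2)^D * (if a then πInv else 1 - πInv) * WcP πSp c) else 0) := by
      intro y
      apply Fintype.sum_equiv (eYPerm y)
      intro ε
      apply Finset.sum_congr rfl; intro a _
      apply Finset.sum_congr rfl; intro c _
      rw [eYPerm_apply, ← yval_oval wInv wSp y a ε c]
      by_cases hcond : sgB y * ovalF wInv wSp (y, ε, a, c) < 0
      · rw [if_pos hcond, if_pos hcond]; simp only [hqdef]; ring
      · rw [if_neg hcond, if_neg hcond]
    calc ∑ y : Bool, ∑ ε : Fin D → Bool, ∑ a : Bool, ∑ c : Fin D → Bool,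
          (if sgB y * ovalF wInv wSp (y, ε, a, c) < 0 then q (y, ε, a, c) else 0)
        = ∑ _y : Bool, ∑ ξ : Fin D → Bool, ∑ a : Bool, ∑ c : Fin D → Bool,
          (if wInv * ioB a + Tv wSp c ξ < 0 then
            (1/2) * (((1:ℝ)/2)^D * (if a then πInv else 1 - πInv) * WcP πSp c) else 0) :=
          Finset.sum_congr rfl fun y _ => hyre y
      _ = ∑ ξ : Fin D → Bool, ∑ a : Bool, ∑ c : Fin D → Bool,
          (if wInv * ioB a + Tv wSp c ξ < 0 then
            ((1:ℝ)/2)^D * (if a then πInv else 1 - πInv) * WcP πSp c else 0) := by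
          rw [Fintype.sum_bool, ← Finset.sum_add_distrib]
          apply Finset.sum_congr rfl; intro ξ _
          rw [← Finset.sum_add_distrib]
          apply Finset.sum_congr rfl; intro a _
          rw [← Finset.sum_add_distrib]
          apply Finset.sum_congr rfl; intro c _
          by_cases hcond : wInv * ioB a + Tv wSp c ξ < 0
          · simp only [if_pos hcond]; ring
          · simp only [if_neg hcond]; ring
      _ = ∑ a : Bool, ∑ c : Fin D → Bool, ∑ ξ : Fin D → Bool,
          (if wInv * ioB a + Tv wSp c ξ < 0 then
            ((1:ℝ)/2)^D * (if a then πInv else 1 - πInv) * WcP πSp c else 0) :=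
          sum3_comm _
  have hcomb := comb_main hD πInv hπInv0 hπInv1 πSp hπSp0 hπSp1 wInv hwInv wSp hwSp
  have hA : 0 < ∑ i, (wSp i / wInv)^2 := by
    have : Nonempty (Fin D) := Fin.pos_iff_nonempty.mp hD
    exact Finset.sum_pos (fun i _ => pow_pos (div_pos (hwSp i) hwInv) 2) Finset.univ_nonempty
  have hfin := aux_scalar πInv (∑ i, (wSp i / wInv)^2) hπInv0 hπInv1 hA
  calc ℓ ≤ ∑ σ ∈ bad, q σ := hl1
    _ ≤ ∑ σ : Cfg D, (if sgB σ.1 * ovalF wInv wSp σ < 0 then q σ else 0) := hl2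
    _ = ∑ a : Bool, ∑ c : Fin D → Bool, ∑ ξ : Fin D → Bool,
        (if wInv * ioB a + Tv wSp c ξ < 0 then
          ((1:ℝ)/2)^D * (if a then πInv else 1 - πInv) * WcP πSp c else 0) := hl3
    _ ≤ (1 - πInv)/2 + πInv * Real.exp (-(1/(2 * ∑ i, (wSp i / wInv)^2))) := hcomb
    _ ≤ 2 * Real.exp (-2 * πInv ^ 2 / (4 * (∑ i, (wSp i / wInv) ^ 2) + 1)) := hfin
end

section
/- (Proposition 1, lower bound and divergence of the invariant weight) Any solution of the gradient-flow system satisfies u(t) ≥ log( e^{u(0)} + (4p(1-p))^{D/2} · t ) for all t ≥ 0; in particular u is strictly increasing and u(t) → +∞ as t → ∞. -/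
/-- **Proposition 1, lower bound and divergence of the invariant weight.** -/
theorem stmt_11
    (D : ℕ) (hD : 0 < D) (p : ℝ) (hp : 1 / 2 < p) (hp1 : p < 1)
    (u : ℝ → ℝ) (v : Fin D → ℝ → ℝ)
    -- gradient-flow system on `[0, ∞)`
    (hu : ∀ t ∈ Set.Ici (0 : ℝ),
      HasDerivWithinAt u
        (Real.exp (-u t) * ∏ i, (p * Real.exp (-v i t) + (1 - p) * Real.exp (v i t)))
        (Set.Ici 0) t)
    (hv : ∀ (j : Fin D), ∀ t ∈ Set.Ici (0 : ℝ),
      HasDerivWithinAt (v j)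
        (Real.exp (-u t) * (p * Real.exp (-v j t) - (1 - p) * Real.exp (v j t)) *
          ∏ i ∈ Finset.univ.erase j,
            (p * Real.exp (-v i t) + (1 - p) * Real.exp (v i t)))
        (Set.Ici 0) t) :
    (∀ t ∈ Set.Ici (0 : ℝ),
      Real.log (Real.exp (u 0) + (4 * p * (1 - p)) ^ ((D : ℝ) / 2) * t) ≤ u t) ∧
    StrictMonoOn u (Set.Ici 0) ∧
    Filter.Tendsto u Filter.atTop Filter.atTop := by
  have hp0 : 0 < p := by linarith
  have hp1' : 0 < 1 - p := by linarith
  set c : ℝ := (4 * p * (1 - p)) ^ ((D : ℝ) / 2) with hc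
  have h4 : (0:ℝ) < 4 * p * (1 - p) := by positivity
  have hcpos : 0 < c := Real.rpow_pos_of_pos h4 _
  -- c = (sqrt (4p(1-p)))^D
  have hcsq : c = Real.sqrt (4 * p * (1 - p)) ^ D := by
    rw [hc, Real.sqrt_eq_rpow, ← Real.rpow_natCast ((4*p*(1-p)) ^ ((1:ℝ)/2)) D,
      ← Real.rpow_mul h4.le]
    norm_num
    ring_nf
  -- pointwise AM-GM bound
  have hg : ∀ w : ℝ, Real.sqrt (4 * p * (1 - p)) ≤
      p * Real.exp (-w) + (1 - p) * Real.exp w := by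
    intro w
    set a := p * Real.exp (-w) with ha
    set b := (1 - p) * Real.exp w with hb
    have ha0 : 0 < a := by positivity
    have hb0 : 0 < b := by positivity
    have hab : a * b = p * (1 - p) := by
      rw [ha, hb]
      rw [show p * Real.exp (-w) * ((1 - p) * Real.exp w)
          = p * (1 - p) * (Real.exp (-w) * Real.exp w) by ring,
        ← Real.exp_add]
      simp
    have h1 : 4 * p * (1 - p) ≤ (a + b) ^ 2 := by nlinarith [sq_nonneg (a - b)]
    calc Real.sqrt (4 * p * (1 - p)) ≤ Real.sqrt ((a + b) ^ 2) := Real.sqrt_le_sqrt h1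
      _ = a + b := by rw [Real.sqrt_sq (by positivity)]
  -- product bound
  have hprod : ∀ t : ℝ, c ≤ ∏ i, (p * Real.exp (-v i t) + (1 - p) * Real.exp (v i t)) := by
    intro t
    have h := Finset.prod_le_prod (s := Finset.univ)
      (f := fun _ : Fin D => Real.sqrt (4 * p * (1 - p)))
      (fun i _ => Real.sqrt_nonneg _) (fun i _ => hg (v i t))
    rwa [Finset.prod_const, Finset.card_univ, Fintype.card_fin, ← hcsq] at h
  have hprodpos : ∀ t : ℝ, 0 < ∏ i, (p * Real.exp (-v i t) + (1 - p) * Real.exp (v i t)) :=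
    fun t => Finset.prod_pos (fun i _ => by positivity)
  -- strict monotonicity
  have hint : interior (Set.Ici (0:ℝ)) = Set.Ioi 0 := interior_Ici
  have hucont : ContinuousOn u (Set.Ici 0) :=
    fun t ht => (hu t ht).continuousWithinAt
  have hmono : StrictMonoOn u (Set.Ici 0) := by
    apply strictMonoOn_of_hasDerivWithinAt_pos (convex_Ici 0) hucont
    · intro x hx
      rw [hint] at hx ⊢
      exact (hu x (Set.mem_Ici.2 (le_of_lt hx))).mono Set.Ioi_subset_Ici_self
    · intro x hx
      rw [hint] at hx
      exact mul_pos (Real.exp_pos _) (hprodpos x)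
  -- F t = exp (u t) - c * t is monotone on Ici 0
  have hF : MonotoneOn (fun t => Real.exp (u t) - c * t) (Set.Ici 0) := by
    apply monotoneOn_of_hasDerivWithinAt_nonneg (f' := fun t =>
        Real.exp (u t) * (Real.exp (-u t) * ∏ i, (p * Real.exp (-v i t) + (1 - p) * Real.exp (v i t))) - c)
      (convex_Ici 0)
    · exact ((Real.continuous_exp.comp_continuousOn hucont).sub
        (continuous_const.mul continuous_id).continuousOn)
    · intro x hx
      rw [hint] at hx ⊢
      have h1 : HasDerivWithinAt (fun t => Real.exp (u t))
          (Real.exp (u x) * (Real.exp (-u x) * ∏ i, (p * Real.exp (-v i x) + (1 - p) * Real.exp (v i x))))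
          (Set.Ioi 0) x :=
        (Real.hasDerivAt_exp (u x)).comp_hasDerivWithinAt x
          ((hu x (Set.mem_Ici.2 (le_of_lt hx))).mono Set.Ioi_subset_Ici_self)
      have h2 : HasDerivWithinAt (fun t : ℝ => c * t) c (Set.Ioi 0) x := by
        simpa using ((hasDerivAt_id x).const_mul c).hasDerivWithinAt (s := Set.Ioi 0)
      exact h1.sub h2
    · intro x hx
      rw [hint] at hx
      have : Real.exp (u x) * (Real.exp (-u x) *
          ∏ i, (p * Real.exp (-v i x) + (1 - p) * Real.exp (v i x)))
          = ∏ i, (p * Real.exp (-v i x) + (1 - p) * Real.exp (v i x)) := by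
        rw [← mul_assoc, ← Real.exp_add]
        simp
      rw [this]
      linarith [hprod x]
  -- lower bound
  have hlow : ∀ t ∈ Set.Ici (0:ℝ), Real.log (Real.exp (u 0) + c * t) ≤ u t := by
    intro t ht
    have h1 : Real.exp (u 0) - c * 0 ≤ Real.exp (u t) - c * t :=
      hF (Set.self_mem_Ici) ht ht
    have h2 : Real.exp (u 0) + c * t ≤ Real.exp (u t) := by linarith
    calc Real.log (Real.exp (u 0) + c * t) ≤ Real.log (Real.exp (u t)) :=
          Real.log_le_log (by have h0 : (0:ℝ) ≤ t := ht; positivity) h2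
      _ = u t := Real.log_exp _
  refine ⟨hlow, hmono, ?_⟩
  -- divergence
  have htend : Filter.Tendsto (fun t => Real.log (Real.exp (u 0) + c * t))
      Filter.atTop Filter.atTop := by
    apply Real.tendsto_log_atTop.comp
    exact Filter.tendsto_atTop_add_const_left _ _
      (Filter.Tendsto.const_mul_atTop hcpos Filter.tendsto_id)
  exact Filter.tendsto_atTop_mono'
    Filter.atTop (Filter.eventually_atTop.2 ⟨0, fun t ht => hlow t ht⟩) htend
end

section
/- (Proposition 1, monotone convergence of the spurious weights) If 0 < v_j(0) < (1/2)·log(p/(1-p)) for every j, then for every j the function v_j is strictly increasing, satisfies v_j(t) < (1/2)·log(p/(1-p)) for all t ≥ 0, and converges to (1/2)·log(p/(1-p)) as t → ∞. -/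
section Aux
variable {p : ℝ}

lemma aux_exp2L (hp : 1 / 2 < p) (hp1 : p < 1) :
    Real.exp (2 * ((1/2) * Real.log (p / (1 - p)))) = p / (1 - p) := by
  rw [show 2 * ((1/2) * Real.log (p / (1 - p))) = Real.log (p / (1-p)) by ring]
  exact Real.exp_log (div_pos (by linarith) (by linarith))

lemma aux_L_pos (hp : 1 / 2 < p) (hp1 : p < 1) : 0 < (1/2) * Real.log (p / (1 - p)) := by
  have : (1:ℝ) < p / (1 - p) := (one_lt_div (by linarith)).2 (by linarith)
  have := Real.log_pos this
  linarith

/-- h positive below L -/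
lemma aux_h_pos (hp : 1 / 2 < p) (hp1 : p < 1) {x : ℝ}
    (hx : x < (1/2) * Real.log (p / (1 - p))) :
    0 < p * Real.exp (-x) - (1 - p) * Real.exp x := by
  have h2 : Real.exp (2 * x) < p / (1 - p) := by
    rw [← aux_exp2L hp hp1]
    exact Real.exp_lt_exp.2 (by linarith)
  have hq : (0:ℝ) < 1 - p := by linarith
  have h3 : (1 - p) * Real.exp (2 * x) < p := by
    calc (1 - p) * Real.exp (2*x) < (1-p) * (p / (1-p)) := (mul_lt_mul_iff_right₀ hq).2 h2
      _ = p := by field_simp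
  have e1 : Real.exp (-x) * Real.exp (2 * x) = Real.exp x := by
    rw [← Real.exp_add]; ring_nf
  nlinarith [Real.exp_pos (-x), Real.exp_pos x, Real.exp_pos (2*x)]

/-- h ≤ 2p (L - x) on [0, L] -/
lemma aux_h_le (hp : 1 / 2 < p) (hp1 : p < 1) {x : ℝ} (hx0 : 0 ≤ x)
    (hxL : x ≤ (1/2) * Real.log (p / (1 - p))) :
    p * Real.exp (-x) - (1 - p) * Real.exp x ≤
      2 * p * ((1/2) * Real.log (p / (1 - p)) - x) := by
  set L := (1/2) * Real.log (p / (1 - p)) with hLdef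
  have hq : (0:ℝ) < 1 - p := by linarith
  have hE : Real.exp (2 * L) = p / (1 - p) := aux_exp2L hp hp1
  have hqE : (1 - p) * Real.exp (2 * L) = p := by rw [hE]; field_simp
  -- e^{2x} ≥ e^{2L} (1 + 2x - 2L)
  have h1 : Real.exp (2*L) * (1 + (2*x - 2*L)) ≤ Real.exp (2*x) := by
    have := Real.add_one_le_exp (2*x - 2*L)
    calc Real.exp (2*L) * (1 + (2*x - 2*L)) ≤ Real.exp (2*L) * Real.exp (2*x - 2*L) := by
          nlinarith [Real.exp_pos (2*L)]
      _ = Real.exp (2*x) := by rw [← Real.exp_add]; ring_nf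
  -- e^{-x} ≤ 1
  have h2 : Real.exp (-x) ≤ 1 := Real.exp_le_one_iff.2 (by linarith)
  -- p - (1-p) e^{2x} ≥ 0
  have h3 : 0 ≤ p - (1 - p) * Real.exp (2*x) := by
    rcases eq_or_lt_of_le hxL with h | h
    · have : Real.exp (2*x) = p / (1-p) := by rw [← hE, h]
      rw [this]; field_simp; norm_num
    · nlinarith [aux_h_pos hp hp1 h, Real.exp_pos (-x), Real.exp_pos x,
        show Real.exp (-x) * Real.exp (2*x) = Real.exp x by rw [← Real.exp_add]; ring_nf]
  have e1 : Real.exp (-x) * Real.exp (2 * x) = Real.exp x := by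
    rw [← Real.exp_add]; ring_nf
  -- LHS = e^{-x}(p - (1-p)e^{2x}) ≤ p - (1-p)e^{2x} = (1-p)(e^{2L} - e^{2x}) ≤ (1-p)e^{2L}(2L-2x) = 2p(L-x)
  nlinarith [Real.exp_pos (-x), Real.exp_pos (2*x)]

end Aux

/-- **Proposition 1, monotone convergence of the spurious weights.** -/
theorem stmt_12
    (D : ℕ) (hD : 0 < D) (p : ℝ) (hp : 1 / 2 < p) (hp1 : p < 1)
    (u : ℝ → ℝ) (v : Fin D → ℝ → ℝ)
    -- gradient-flow system on `[0, ∞)`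
    (hu : ∀ t ∈ Set.Ici (0 : ℝ),
      HasDerivWithinAt u
        (Real.exp (-u t) * ∏ i, (p * Real.exp (-v i t) + (1 - p) * Real.exp (v i t)))
        (Set.Ici 0) t)
    (hv : ∀ (j : Fin D), ∀ t ∈ Set.Ici (0 : ℝ),
      HasDerivWithinAt (v j)
        (Real.exp (-u t) * (p * Real.exp (-v j t) - (1 - p) * Real.exp (v j t)) *
          ∏ i ∈ Finset.univ.erase j,
            (p * Real.exp (-v i t) + (1 - p) * Real.exp (v i t)))
        (Set.Ici 0) t)
    (hv0 : ∀ j, 0 < v j 0 ∧ v j 0 < (1 / 2) * Real.log (p / (1 - p))) :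
    ∀ j, StrictMonoOn (v j) (Set.Ici 0) ∧
      (∀ t ∈ Set.Ici (0 : ℝ), v j t < (1 / 2) * Real.log (p / (1 - p))) ∧
      Filter.Tendsto (v j) Filter.atTop (nhds ((1 / 2) * Real.log (p / (1 - p)))) := by
  have hq : (0:ℝ) < 1 - p := by linarith
  set L : ℝ := (1 / 2) * Real.log (p / (1 - p)) with hLdef
  have hLpos : 0 < L := aux_L_pos hp hp1
  -- continuity
  have hcontv : ∀ i, ContinuousOn (v i) (Set.Ici 0) :=
    fun i t ht => (hv i t ht).continuousWithinAt
  have hcontu : ContinuousOn u (Set.Ici 0) :=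
    fun t ht => (hu t ht).continuousWithinAt
  -- unrestricted derivatives on (0, ∞)
  have hvD : ∀ i : Fin D, ∀ x : ℝ, 0 < x →
      HasDerivAt (v i)
        (Real.exp (-u x) * (p * Real.exp (-v i x) - (1 - p) * Real.exp (v i x)) *
          ∏ m ∈ Finset.univ.erase i,
            (p * Real.exp (-v m x) + (1 - p) * Real.exp (v m x))) x :=
    fun i x hx => (hv i x (le_of_lt hx)).hasDerivAt (Ici_mem_nhds hx)
  have huD : ∀ x : ℝ, 0 < x →
      HasDerivAt u
        (Real.exp (-u x) * ∏ i, (p * Real.exp (-v i x) + (1 - p) * Real.exp (v i x))) x :=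
    fun x hx => (hu x (le_of_lt hx)).hasDerivAt (Ici_mem_nhds hx)
  -- g is always positive
  have gpos : ∀ x : ℝ, 0 < p * Real.exp (-x) + (1 - p) * Real.exp x := fun x => by
    nlinarith [Real.exp_pos (-x), Real.exp_pos x]
  -- g ≤ 1 + e^L on [0, L]
  have gle : ∀ x : ℝ, 0 ≤ x → x ≤ L →
      p * Real.exp (-x) + (1 - p) * Real.exp x ≤ 1 + Real.exp L := fun x hx0 hxL => by
    have h1 : Real.exp (-x) ≤ 1 := Real.exp_le_one_iff.2 (by linarith)
    have h2 : Real.exp x ≤ Real.exp L := Real.exp_le_exp.2 hxL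
    nlinarith [Real.exp_pos x, Real.exp_pos (-x)]
  -- q ≤ g on [0, ∞)
  have gge : ∀ x : ℝ, 0 ≤ x →
      1 - p ≤ p * Real.exp (-x) + (1 - p) * Real.exp x := fun x hx0 => by
    have h2 : (1:ℝ) ≤ Real.exp x := Real.one_le_exp hx0
    nlinarith [Real.exp_pos (-x)]
  -- u is monotone on [0, ∞)
  have humono : MonotoneOn u (Set.Ici 0) := by
    apply monotoneOn_of_deriv_nonneg (convex_Ici 0) hcontu
    · intro x hx
      rw [interior_Ici] at hx
      exact (huD x hx).differentiableAt.differentiableWithinAt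
    · intro x hx
      rw [interior_Ici] at hx
      rw [(huD x hx).deriv]
      have := Finset.prod_pos (fun i (_ : i ∈ (Finset.univ : Finset (Fin D))) => gpos (v i x))
      positivity
  -- ================= KEY INVARIANCE =================
  have key : ∀ t ∈ Set.Ici (0:ℝ), ∀ i, 0 < v i t ∧ v i t < L := by
    set B : Set ℝ :=
      ⋃ i : Fin D, (Set.Ici 0 ∩ v i ⁻¹' Set.Iic 0 ∪ Set.Ici 0 ∩ v i ⁻¹' Set.Ici L) with hBdef
    have hBclosed : IsClosed B := by
      apply isClosed_iUnion_of_finite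
      intro i
      exact ((hcontv i).preimage_isClosed_of_isClosed isClosed_Ici isClosed_Iic).union
        ((hcontv i).preimage_isClosed_of_isClosed isClosed_Ici isClosed_Ici)
    have hBmem : ∀ t : ℝ, t ∈ B ↔ 0 ≤ t ∧ ∃ i, v i t ≤ 0 ∨ L ≤ v i t := by
      intro t
      simp only [hBdef, Set.mem_iUnion, Set.mem_union, Set.mem_inter_iff, Set.mem_Ici,
        Set.mem_preimage, Set.mem_Iic]
      constructor
      · rintro ⟨i, hi⟩
        rcases hi with ⟨ht, h⟩ | ⟨ht, h⟩
        · exact ⟨ht, i, Or.inl h⟩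
        · exact ⟨ht, i, Or.inr h⟩
      · rintro ⟨ht, i, h | h⟩
        · exact ⟨i, Or.inl ⟨ht, h⟩⟩
        · exact ⟨i, Or.inr ⟨ht, h⟩⟩
    have hBbdd : BddBelow B := ⟨0, fun x hx => ((hBmem x).1 hx).1⟩
    -- B is empty
    have hBempty : ∀ t, t ∉ B := by
      by_contra hB
      push_neg at hB
      obtain ⟨t0, ht0⟩ := hB
      set T := sInf B with hTdef
      have hTB : T ∈ B := hBclosed.csInf_mem ⟨t0, ht0⟩ hBbdd
      have hT0 : 0 ≤ T := ((hBmem T).1 hTB).1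
      have hTne : T ≠ 0 := by
        intro h
        obtain ⟨_, i, hi⟩ := (hBmem T).1 hTB
        rw [h] at hi
        rcases hi with hi | hi
        · exact absurd (hv0 i).1 (not_lt.2 hi)
        · exact absurd (hv0 i).2 (not_lt.2 hi)
      have hTpos : 0 < T := lt_of_le_of_ne hT0 (Ne.symm hTne)
      have hgood : ∀ s, 0 ≤ s → s < T → ∀ i, 0 < v i s ∧ v i s < L := by
        intro s hs0 hsT i
        have hsB : s ∉ B := fun hs => absurd hsT (not_lt.2 (csInf_le hBbdd hs))
        rw [hBmem] at hsB
        push_neg at hsB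
        exact hsB hs0 i
      obtain ⟨_, k, hk⟩ := (hBmem T).1 hTB
      -- v k is strictly increasing on [0, T]
      have hmonok : StrictMonoOn (v k) (Set.Icc 0 T) := by
        apply strictMonoOn_of_deriv_pos (convex_Icc 0 T)
          ((hcontv k).mono (Set.Icc_subset_Ici_self))
        intro x hx
        rw [interior_Icc] at hx
        rw [(hvD k x hx.1).deriv]
        have h1 := aux_h_pos hp hp1 (hgood x (le_of_lt hx.1) hx.2 k).2
        have h2 := Finset.prod_pos
          (fun i (_ : i ∈ Finset.univ.erase k) => gpos (v i x))
        positivity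
      have hvk0T : v k 0 < v k T :=
        hmonok ⟨le_refl 0, hT0⟩ ⟨hT0, le_refl T⟩ hTpos
      rcases hk with hk | hk
      · exact absurd ((hv0 k).1.trans hvk0T) (not_lt.2 hk)
      -- Gronwall-type argument: v k cannot reach L
      · set C : ℝ := Real.exp (-u 0) * (2 * p) * (1 + Real.exp L) ^ (D - 1) with hCdef
        set y : ℝ → ℝ := fun t => (L - v k t) * Real.exp (C * t) with hydef
        have hymono : MonotoneOn y (Set.Icc 0 T) := by
          have hyD : ∀ x ∈ Set.Ioo (0:ℝ) T, HasDerivAt y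
              ((0 - (Real.exp (-u x) * (p * Real.exp (-v k x) - (1 - p) * Real.exp (v k x)) *
                ∏ m ∈ Finset.univ.erase k,
                  (p * Real.exp (-v m x) + (1 - p) * Real.exp (v m x)))) * Real.exp (C * x)
                + (L - v k x) * (Real.exp (C * x) * C)) x := by
            intro x hx
            have hin : HasDerivAt (fun t : ℝ => Real.exp (C * t)) (Real.exp (C * x) * C) x := by
              simpa using (((hasDerivAt_id x).const_mul C).exp)
            exact ((hasDerivAt_const x L).sub (hvD k x hx.1)).mul hin
          apply monotoneOn_of_deriv_nonneg (convex_Icc 0 T)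
          · exact (continuousOn_const.sub ((hcontv k).mono Set.Icc_subset_Ici_self)).mul
              (Real.continuous_exp.comp (continuous_const.mul continuous_id)).continuousOn
          · intro x hx
            rw [interior_Icc] at hx
            exact (hyD x hx).differentiableAt.differentiableWithinAt
          · intro x hx
            rw [interior_Icc] at hx
            rw [(hyD x hx).deriv]
            -- bound the derivative of v k
            have hb1 : Real.exp (-u x) ≤ Real.exp (-u 0) :=
              Real.exp_le_exp.2 (neg_le_neg (humono Set.self_mem_Ici (Set.mem_Ici.2 (le_of_lt hx.1)) (le_of_lt hx.1)))
            have hvx := hgood x (le_of_lt hx.1) hx.2 k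
            have hb2 : p * Real.exp (-v k x) - (1 - p) * Real.exp (v k x)
                ≤ 2 * p * (L - v k x) := aux_h_le hp hp1 (le_of_lt hvx.1) (le_of_lt hvx.2)
            have hb3 : (∏ m ∈ Finset.univ.erase k,
                (p * Real.exp (-v m x) + (1 - p) * Real.exp (v m x)))
                ≤ (1 + Real.exp L) ^ (D - 1) := by
              have := Finset.prod_le_prod
                (f := fun m => p * Real.exp (-v m x) + (1 - p) * Real.exp (v m x))
                (g := fun _ => 1 + Real.exp L)
                (fun m (_ : m ∈ Finset.univ.erase k) => le_of_lt (gpos (v m x)))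
                (fun m _ => gle (v m x) (le_of_lt (hgood x (le_of_lt hx.1) hx.2 m).1)
                  (le_of_lt (hgood x (le_of_lt hx.1) hx.2 m).2))
              rwa [Finset.prod_const, Finset.card_erase_of_mem (Finset.mem_univ k),
                Finset.card_univ, Fintype.card_fin] at this
            have hh0 : 0 ≤ p * Real.exp (-v k x) - (1 - p) * Real.exp (v k x) :=
              le_of_lt (aux_h_pos hp hp1 hvx.2)
            have hP0 : 0 ≤ ∏ m ∈ Finset.univ.erase k,
                (p * Real.exp (-v m x) + (1 - p) * Real.exp (v m x)) :=
              le_of_lt (Finset.prod_pos (fun m _ => gpos (v m x)))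
            have hLv0 : 0 ≤ L - v k x := by linarith [hvx.2]
            have hvle : Real.exp (-u x) * (p * Real.exp (-v k x) - (1 - p) * Real.exp (v k x)) *
                ∏ m ∈ Finset.univ.erase k,
                  (p * Real.exp (-v m x) + (1 - p) * Real.exp (v m x))
                ≤ C * (L - v k x) := by
              have step1 : Real.exp (-u x) * (p * Real.exp (-v k x) - (1 - p) * Real.exp (v k x))
                  ≤ Real.exp (-u 0) * (2 * p * (L - v k x)) :=
                mul_le_mul hb1 hb2 hh0 (le_of_lt (Real.exp_pos _))
              have step2 := mul_le_mul step1 hb3 hP0 (by positivity)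
              calc Real.exp (-u x) * (p * Real.exp (-v k x) - (1 - p) * Real.exp (v k x)) *
                    ∏ m ∈ Finset.univ.erase k,
                      (p * Real.exp (-v m x) + (1 - p) * Real.exp (v m x))
                  ≤ Real.exp (-u 0) * (2 * p * (L - v k x)) * (1 + Real.exp L) ^ (D - 1) := step2
                _ = C * (L - v k x) := by rw [hCdef]; ring
            nlinarith [Real.exp_pos (C * x)]
        have hy0 : 0 < y 0 := by
          simp only [hydef, mul_zero, Real.exp_zero, mul_one]
          linarith [(hv0 k).2]
        have hyT : y T ≤ 0 := by
          simp only [hydef]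
          have : L - v k T ≤ 0 := by linarith
          nlinarith [Real.exp_pos (C * T)]
        have := hymono ⟨le_refl 0, hT0⟩ ⟨hT0, le_refl T⟩ hT0
        linarith
    intro t ht i
    have : t ∉ B := hBempty t
    rw [hBmem] at this
    push_neg at this
    exact this ht i
  -- ================= CONCLUSIONS =================
  intro j
  have hsm : StrictMonoOn (v j) (Set.Ici 0) := by
    apply strictMonoOn_of_deriv_pos (convex_Ici 0) (hcontv j)
    intro x hx
    rw [interior_Ici] at hx
    rw [(hvD j x hx).deriv]
    have h1 := aux_h_pos hp hp1 (key x (Set.mem_Ici.2 (le_of_lt hx)) j).2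
    have h2 := Finset.prod_pos (fun i (_ : i ∈ Finset.univ.erase j) => gpos (v i x))
    positivity
  refine ⟨hsm, fun t ht => (key t ht j).2, ?_⟩
  -- convergence
  set f : ℝ → ℝ := fun t => v j (max t 0) with hfdef
  have hfeq : f =ᶠ[Filter.atTop] v j := by
    filter_upwards [Filter.eventually_ge_atTop (0:ℝ)] with t ht
    simp [hfdef, max_eq_left ht]
  have hfmono : Monotone f := fun a b hab =>
    hsm.monotoneOn (le_max_right a 0) (le_max_right b 0) (max_le_max hab (le_refl 0))
  have hbdd : BddAbove (Set.range f) := by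
    refine ⟨L, ?_⟩
    rintro x ⟨t, rfl⟩
    exact le_of_lt (key (max t 0) (le_max_right t 0) j).2
  have hten : Filter.Tendsto f Filter.atTop (nhds (⨆ t, f t)) :=
    tendsto_atTop_ciSup hfmono hbdd
  set l : ℝ := ⨆ t, f t with hldef
  have hfle : ∀ t, f t ≤ l := fun t => le_ciSup hbdd t
  have hvjle : ∀ t, 0 ≤ t → v j t ≤ l := by
    intro t ht
    have h := hfle t
    simpa [hfdef, max_eq_left ht] using h
  have hlL : l ≤ L := ciSup_le fun t => le_of_lt (key (max t 0) (le_max_right t 0) j).2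
  have hl0 : 0 < l := lt_of_lt_of_le (hv0 j).1 (by simpa [hfdef] using hfle 0)
  have hlL' : l = L := by
    by_contra hne
    have hlt : l < L := lt_of_le_of_ne hlL hne
    set A : ℝ := Real.exp (u 0) with hAdef
    set Bc : ℝ := (1 + Real.exp L) ^ D with hBcdef
    have hA : 0 < A := Real.exp_pos _
    have hBc : 0 < Bc := by positivity
    -- exp (u t) grows at most linearly
    have hψ : AntitoneOn (fun t => Real.exp (u t) - Bc * t) (Set.Ici 0) := by
      have hψD : ∀ x : ℝ, 0 < x → HasDerivAt (fun t => Real.exp (u t) - Bc * t)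
          (Real.exp (u x) * (Real.exp (-u x) *
            ∏ i, (p * Real.exp (-v i x) + (1 - p) * Real.exp (v i x))) - Bc * 1) x := by
        intro x hx
        have h2 : HasDerivAt (fun t : ℝ => Bc * t) (Bc * 1) x := (hasDerivAt_id x).const_mul Bc
        exact ((huD x hx).exp).sub h2
      apply antitoneOn_of_deriv_nonpos (convex_Ici 0)
      · exact (Real.continuous_exp.comp_continuousOn hcontu).sub
          (continuous_const.mul continuous_id).continuousOn
      · intro x hx
        rw [interior_Ici] at hx
        exact (hψD x hx).differentiableAt.differentiableWithinAt
      · intro x hx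
        rw [interior_Ici] at hx
        rw [(hψD x hx).deriv]
        have e1 : Real.exp (u x) * Real.exp (-u x) = 1 := by
          rw [← Real.exp_add]; simp
        have hPle : (∏ i, (p * Real.exp (-v i x) + (1 - p) * Real.exp (v i x))) ≤ Bc := by
          rw [hBcdef]
          have := Finset.prod_le_prod
            (f := fun m => p * Real.exp (-v m x) + (1 - p) * Real.exp (v m x))
            (g := fun _ => 1 + Real.exp L)
            (fun m (_ : m ∈ (Finset.univ : Finset (Fin D))) => le_of_lt (gpos (v m x)))
            (fun m _ => gle (v m x) (le_of_lt (key x (Set.mem_Ici.2 (le_of_lt hx)) m).1)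
              (le_of_lt (key x (Set.mem_Ici.2 (le_of_lt hx)) m).2))
          rwa [Finset.prod_const, Finset.card_univ, Fintype.card_fin] at this
        rw [← mul_assoc, e1, one_mul, mul_one]
        linarith
    have hUle : ∀ t, 0 ≤ t → Real.exp (u t) ≤ A + Bc * t := by
      intro t ht
      have h := hψ (Set.self_mem_Ici) (Set.mem_Ici.2 ht) ht
      simp only [mul_zero, sub_zero] at h
      linarith
    set c : ℝ := (p * Real.exp (-l) - (1 - p) * Real.exp l) * (1 - p) ^ (D - 1) with hcdef
    have hhl : 0 < p * Real.exp (-l) - (1 - p) * Real.exp l := aux_h_pos hp hp1 hlt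
    have hc : 0 < c := mul_pos hhl (by positivity)
    -- v j grows at least logarithmically
    have hφ : MonotoneOn (fun t => v j t - (c / Bc) * Real.log (A + Bc * t)) (Set.Ici 0) := by
      have hposAB : ∀ x : ℝ, 0 ≤ x → 0 < A + Bc * x := fun x hx => by positivity
      have hlogD : ∀ x : ℝ, 0 ≤ x → HasDerivAt (fun t => Real.log (A + Bc * t))
          (Bc / (A + Bc * x)) x := by
        intro x hx
        have h1 : HasDerivAt (fun t : ℝ => A + Bc * t) (Bc * 1) x :=
          ((hasDerivAt_id x).const_mul Bc).const_add A
        have := h1.log (ne_of_gt (hposAB x hx))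
        simpa using this
      apply monotoneOn_of_deriv_nonneg (convex_Ici 0)
      · apply (hcontv j).sub
        apply ContinuousOn.mul continuousOn_const
        intro t ht
        exact ((hlogD t ht).continuousAt).continuousWithinAt
      · intro x hx
        rw [interior_Ici] at hx
        exact ((hvD j x hx).sub (((hlogD x (le_of_lt hx)).const_mul (c / Bc)))).differentiableAt.differentiableWithinAt
      · intro x hx
        rw [interior_Ici] at hx
        rw [HasDerivAt.deriv (f := fun t => v j t - c / Bc * Real.log (A + Bc * t)) ((hvD j x hx).sub (((hlogD x (le_of_lt hx)).const_mul (c / Bc))))]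
        have e2 : c / Bc * (Bc / (A + Bc * x)) = c / (A + Bc * x) := by
          field_simp
        rw [e2]
        -- lower bound on the derivative of v j
        have hb1 : 1 / (A + Bc * x) ≤ Real.exp (-u x) := by
          rw [Real.exp_neg, one_div]
          exact inv_anti₀ (Real.exp_pos _) (hUle x (le_of_lt hx))
        have hb2 : p * Real.exp (-l) - (1 - p) * Real.exp l
            ≤ p * Real.exp (-v j x) - (1 - p) * Real.exp (v j x) := by
          have h1 : Real.exp (-l) ≤ Real.exp (-v j x) :=
            Real.exp_le_exp.2 (neg_le_neg (hvjle x (le_of_lt hx)))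
          have h2 : Real.exp (v j x) ≤ Real.exp l :=
            Real.exp_le_exp.2 (hvjle x (le_of_lt hx))
          nlinarith
        have hb3 : (1 - p) ^ (D - 1) ≤ ∏ m ∈ Finset.univ.erase j,
            (p * Real.exp (-v m x) + (1 - p) * Real.exp (v m x)) := by
          have := Finset.prod_le_prod
            (f := fun _ : Fin D => 1 - p)
            (g := fun m => p * Real.exp (-v m x) + (1 - p) * Real.exp (v m x))
            (s := Finset.univ.erase j)
            (fun m _ => le_of_lt hq)
            (fun m _ => gge (v m x) (le_of_lt (key x (Set.mem_Ici.2 (le_of_lt hx)) m).1))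
          rwa [Finset.prod_const, Finset.card_erase_of_mem (Finset.mem_univ j),
            Finset.card_univ, Fintype.card_fin] at this
        have step1 : (1 / (A + Bc * x)) * (p * Real.exp (-l) - (1 - p) * Real.exp l)
            ≤ Real.exp (-u x) * (p * Real.exp (-v j x) - (1 - p) * Real.exp (v j x)) :=
          mul_le_mul hb1 hb2 (le_of_lt hhl) (le_of_lt (Real.exp_pos _))
        have hhx : 0 ≤ p * Real.exp (-v j x) - (1 - p) * Real.exp (v j x) :=
          le_of_lt (aux_h_pos hp hp1 (key x (Set.mem_Ici.2 (le_of_lt hx)) j).2)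
        have step2 := mul_le_mul step1 hb3 (by positivity)
          (mul_nonneg (le_of_lt (Real.exp_pos _)) hhx)
        have e3 : (1 / (A + Bc * x)) * (p * Real.exp (-l) - (1 - p) * Real.exp l) *
            (1 - p) ^ (D - 1) = c / (A + Bc * x) := by
          rw [hcdef]; ring
        rw [e3] at step2
        linarith
    -- log grows without bound, contradiction
    have hdiv : Filter.Tendsto (fun t => Real.log (A + Bc * t)) Filter.atTop Filter.atTop :=
      Real.tendsto_log_atTop.comp
        (Filter.tendsto_atTop_add_const_left _ A
          (Filter.Tendsto.const_mul_atTop hBc Filter.tendsto_id))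
    obtain ⟨t, hgt, ht0⟩ :
        ∃ t : ℝ, Real.log A + (l - v j 0) * (Bc / c) < Real.log (A + Bc * t) ∧ 0 ≤ t :=
      ((hdiv.eventually_gt_atTop _).and (Filter.eventually_ge_atTop (0:ℝ))).exists
    have hφt := hφ Set.self_mem_Ici (Set.mem_Ici.2 ht0) ht0
    simp only [mul_zero, add_zero] at hφt
    have hcb : 0 < c / Bc := by positivity
    have hc' : c ≠ 0 := ne_of_gt hc
    have hBc' : Bc ≠ 0 := ne_of_gt hBc
    have e0 : c / Bc * (Bc / c) = 1 := by
      field_simp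
    have h5a : c / Bc * ((l - v j 0) * (Bc / c)) <
        c / Bc * (Real.log (A + Bc * t) - Real.log A) :=
      mul_lt_mul_of_pos_left (by linarith) hcb
    have h5b : c / Bc * ((l - v j 0) * (Bc / c)) = l - v j 0 := by
      calc c / Bc * ((l - v j 0) * (Bc / c)) = (l - v j 0) * (c / Bc * (Bc / c)) := by ring
        _ = l - v j 0 := by rw [e0, mul_one]
    have h5c : c / Bc * (Real.log (A + Bc * t) - Real.log A)
        = c / Bc * Real.log (A + Bc * t) - c / Bc * Real.log A := by ring
    have h6 : l < v j t := by linarith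
    exact absurd (hvjle t ht0) (not_le.2 h6)
  rw [hlL'] at hten
  exact hten.congr' hfeq
end

section
/- (Proposition 1, upper bound on the invariant weight) If 0 < v_j(0) < (1/2)·log(p/(1-p)) for every j, then for all t ≥ 0, u(t) ≤ log( e^{u(0)} + t · Π_{i=1}^D ( p·e^{-v_i(0)} + √(p(1-p)) ) ). -/
/-- **Proposition 1, upper bound on the invariant weight.** -/
theorem stmt_13
    (D : ℕ) (hD : 0 < D) (p : ℝ) (hp : 1 / 2 < p) (hp1 : p < 1)
    (u : ℝ → ℝ) (v : Fin D → ℝ → ℝ)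
    -- gradient-flow system on `[0, ∞)`
    (hu : ∀ t ∈ Set.Ici (0 : ℝ),
      HasDerivWithinAt u
        (Real.exp (-u t) * ∏ i, (p * Real.exp (-v i t) + (1 - p) * Real.exp (v i t)))
        (Set.Ici 0) t)
    (hv : ∀ (j : Fin D), ∀ t ∈ Set.Ici (0 : ℝ),
      HasDerivWithinAt (v j)
        (Real.exp (-u t) * (p * Real.exp (-v j t) - (1 - p) * Real.exp (v j t)) *
          ∏ i ∈ Finset.univ.erase j,
            (p * Real.exp (-v i t) + (1 - p) * Real.exp (v i t)))
        (Set.Ici 0) t)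
    (hv0 : ∀ j, 0 < v j 0 ∧ v j 0 < (1 / 2) * Real.log (p / (1 - p))) :
    ∀ t ∈ Set.Ici (0 : ℝ),
      u t ≤ Real.log (Real.exp (u 0) +
        t * ∏ i, (p * Real.exp (-v i 0) + Real.sqrt (p * (1 - p)))) := by
  have hp0 : (0:ℝ) < p := by linarith
  have h1p : (0:ℝ) < 1 - p := by linarith
  set g : Fin D → ℝ → ℝ :=
    fun i t => p * Real.exp (-v i t) + (1 - p) * Real.exp (v i t) with hgdef
  have gpos : ∀ i t, 0 < g i t := fun i t => by positivity
  have Ppos : ∀ t, 0 < ∏ i, g i t := fun t => Finset.prod_pos fun i _ => gpos i t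
  -- constancy lemma on Ici 0
  have const_aux : ∀ F : ℝ → ℝ,
      (∀ t ∈ Set.Ici (0:ℝ), HasDerivWithinAt F 0 (Set.Ici 0) t) →
      ∀ t ∈ Set.Ici (0:ℝ), F t = F 0 := by
    intro F hF t ht
    have hc : ContinuousOn F (Set.Icc 0 t) := fun x hx =>
      ((hF x hx.1).continuousWithinAt).mono (fun y hy => hy.1)
    exact constant_of_has_deriv_right_zero hc
      (fun x hx => (hF x hx.1).mono (Set.Ici_subset_Ici.mpr hx.1))
      t ⟨ht, le_refl t⟩
  -- h_j e^u is constant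
  have hFconst : ∀ j, ∀ t ∈ Set.Ici (0:ℝ),
      (p * Real.exp (-v j t) - (1 - p) * Real.exp (v j t)) * Real.exp (u t)
      = (p * Real.exp (-v j 0) - (1 - p) * Real.exp (v j 0)) * Real.exp (u 0) := by
    intro j
    apply const_aux
    intro t ht
    have hvj := hv j t ht
    have hut := hu t ht
    have e1 := (hvj.neg).exp
    have e2 := hvj.exp
    have e3 := hut.exp
    have hF' := ((e1.const_mul p).sub (e2.const_mul (1-p))).mul e3
    refine hF'.congr_deriv ?_
    symm
    simp only [Pi.sub_apply, Pi.neg_apply]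
    have hsplit : ∏ i, g i t = g j t * ∏ i ∈ Finset.univ.erase j, g i t :=
      (Finset.mul_prod_erase Finset.univ _ (Finset.mem_univ j)).symm
    simp only [hgdef] at hsplit
    rw [hsplit, Real.exp_neg (u t)]
    field_simp
    ring
  -- h positive initially
  have hinit : ∀ j, 0 < p * Real.exp (-v j 0) - (1 - p) * Real.exp (v j 0) := by
    intro j
    have h2 : v j 0 < 1/2 * Real.log (p/(1-p)) := (hv0 j).2
    have hlt : Real.exp (2 * v j 0) < p / (1 - p) := by
      rw [← Real.exp_log (show (0:ℝ) < p/(1-p) by positivity)]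
      exact Real.exp_lt_exp.mpr (by linarith)
    have hx : Real.exp (2 * v j 0) = Real.exp (v j 0) * Real.exp (v j 0) := by
      rw [← Real.exp_add]; ring_nf
    have hne : Real.exp (-v j 0) = (Real.exp (v j 0))⁻¹ := Real.exp_neg _
    have hep := Real.exp_pos (v j 0)
    rw [hne]
    rw [hx, lt_div_iff₀ h1p] at hlt
    have hinv : Real.exp (v j 0) * (Real.exp (v j 0))⁻¹ = 1 := mul_inv_cancel₀ hep.ne'
    nlinarith [inv_pos.mpr hep]
  -- h stays positive
  have hpos : ∀ j, ∀ t ∈ Set.Ici (0:ℝ),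
      0 < p * Real.exp (-v j t) - (1 - p) * Real.exp (v j t) := by
    intro j t ht
    have hc := hFconst j t ht
    have h0 := hinit j
    have e1 := Real.exp_pos (u t)
    have e2 := Real.exp_pos (u 0)
    nlinarith
  -- v j monotone
  have hmono : ∀ j, ∀ t ∈ Set.Ici (0:ℝ), v j 0 ≤ v j t := by
    intro j t ht
    rcases eq_or_lt_of_le (Set.mem_Ici.mp ht) with h | h
    · rw [← h]
    · have hs : StrictMonoOn (v j) (Set.Ici 0) := by
        apply strictMonoOn_of_deriv_pos (convex_Ici 0)
        · exact fun x hx => (hv j x hx).continuousWithinAt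
        · intro x hx
          rw [interior_Ici] at hx
          have hx0 : x ∈ Set.Ici (0:ℝ) := Set.mem_Ici.mpr (le_of_lt hx)
          have hd := (hv j x hx0).hasDerivAt (Ici_mem_nhds hx)
          rw [hd.deriv]
          have := hpos j x hx0
          have := Real.exp_pos (-u x)
          have : 0 < ∏ i ∈ Finset.univ.erase j, g i x :=
            Finset.prod_pos fun i _ => gpos i x
          positivity
      exact le_of_lt (hs (Set.mem_Ici.mpr (le_refl 0)) (Set.mem_Ici.mpr (le_of_lt h)) h)
  -- bound on g
  have hC : ∀ i, ∀ t ∈ Set.Ici (0:ℝ),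
      g i t ≤ p * Real.exp (-v i 0) + Real.sqrt (p * (1 - p)) := by
    intro i t ht
    have h1 : p * Real.exp (-v i t) ≤ p * Real.exp (-v i 0) := by
      have hm := hmono i t ht
      exact mul_le_mul_of_nonneg_left (Real.exp_le_exp.mpr (neg_le_neg hm)) hp0.le
    have h2 : (1 - p) * Real.exp (v i t) ≤ Real.sqrt (p * (1 - p)) := by
      have hh := hpos i t ht
      have hep := Real.exp_pos (v i t)
      have hepn := Real.exp_pos (-v i t)
      have hsq : ((1 - p) * Real.exp (v i t))^2 < p * (1 - p) := by
        have hee : Real.exp (v i t) * Real.exp (-v i t) = 1 := by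
          rw [← Real.exp_add]; simp
        nlinarith [mul_pos (mul_pos h1p hep) hh]
      have := (Real.lt_sqrt (by positivity)).mpr hsq
      linarith
    simp only [hgdef]
    linarith
  set C : ℝ := ∏ i, (p * Real.exp (-v i 0) + Real.sqrt (p * (1 - p))) with hCdef
  have hCpos : 0 < C := Finset.prod_pos fun i _ => by positivity
  have hPC : ∀ t ∈ Set.Ici (0:ℝ), ∏ i, g i t ≤ C := by
    intro t ht
    exact Finset.prod_le_prod (fun i _ => le_of_lt (gpos i t)) (fun i _ => hC i t ht)
  -- G antitone
  have hder : ∀ x ∈ interior (Set.Ici (0:ℝ)),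
      HasDerivAt (fun t => Real.exp (u t) - Real.exp (u 0) - t * C)
        (∏ i, g i x - C) x := by
    intro x hx
    rw [interior_Ici] at hx
    have hx0 : x ∈ Set.Ici (0:ℝ) := Set.mem_Ici.mpr (le_of_lt hx)
    have h1 := ((hu x hx0).hasDerivAt (Ici_mem_nhds hx)).exp
    have h2 := (hasDerivAt_id x).mul_const C
    have h3 := (h1.sub_const (Real.exp (u 0))).sub h2
    refine h3.congr_deriv ?_
    symm
    rw [Real.exp_neg (u x)]
    field_simp
    rfl
  have hG : AntitoneOn (fun t => Real.exp (u t) - Real.exp (u 0) - t * C) (Set.Ici 0) := by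
    apply antitoneOn_of_deriv_nonpos (convex_Ici 0)
    · apply ContinuousOn.sub
      apply ContinuousOn.sub
      · exact fun x hx => ((hu x hx).exp).continuousWithinAt
      · exact continuousOn_const
      · exact (continuousOn_id.mul continuousOn_const)
    · exact fun x hx => ((hder x hx).differentiableAt).differentiableWithinAt
    · intro x hx
      have hxI := hx
      rw [interior_Ici] at hxI
      rw [(hder x hx).deriv]
      have := hPC x (Set.mem_Ici.mpr (le_of_lt hxI))
      linarith
  intro t ht
  have hGt : Real.exp (u t) - Real.exp (u 0) - t * C ≤
      Real.exp (u 0) - Real.exp (u 0) - 0 * C := by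
    have := hG (Set.mem_Ici.mpr (le_refl 0)) ht (Set.mem_Ici.mp ht)
    simpa using this
  have hexp : Real.exp (u t) ≤ Real.exp (u 0) + t * C := by
    simp at hGt; linarith
  have hX : 0 < Real.exp (u 0) + t * C := by
    have := Real.exp_pos (u 0)
    have ht0 : 0 ≤ t := ht
    nlinarith
  rw [Real.le_log_iff_exp_le hX]
  exact hexp
end
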